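/- arXiv:2503.17177 — 9 statements merged into one kernel-verified Lean document; each statement's English description precedes it below -/
import Mathlib

section
/- Let ρ(x) = |x|^p + a with p > 0 and a > 0. Given any finite collection of closed intervals [αᵢ, βᵢ] ⊂ ℝ, 1 ≤ i ≤ N, with αᵢ < βᵢ, which are pairwise disjoint, there exists a single interval [α, β] with α ≤ 0 < β such that ∫_α^β ρ(x) dx = Σᵢ ∫_{αᵢ}^{βᵢ} ρ(x) dx and ρ(α) + ρ(β) ≤ Σᵢ (ρ(αᵢ) + ρ(βᵢ)). -/
open MeasureTheory intervalIntegral Set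

private lemma int_lb {f : ℝ → ℝ} (hc : Continuous f) {a : ℝ} (hf : ∀ x, a ≤ f x)
    {x y : ℝ} (hxy : x ≤ y) : a * (y - x) ≤ ∫ t in x..y, f t := by
  have : (∫ _t in x..y, a) ≤ ∫ t in x..y, f t :=
    integral_mono_on hxy intervalIntegrable_const (hc.intervalIntegrable _ _) (fun t _ => hf t)
  simpa [intervalIntegral.integral_const, smul_eq_mul, mul_comm] using this

private lemma prim_strictMono {f : ℝ → ℝ} (hc : Continuous f) {a : ℝ} (ha : 0 < a)
    (hf : ∀ x, a ≤ f x) : StrictMono (fun x => ∫ t in (0:ℝ)..x, f t) := by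
  intro x y hxy
  have h1 : (∫ t in (0:ℝ)..x, f t) + ∫ t in x..y, f t = ∫ t in (0:ℝ)..y, f t :=
    integral_add_adjacent_intervals (hc.intervalIntegrable _ _) (hc.intervalIntegrable _ _)
  have h2 : a * (y - x) ≤ ∫ t in x..y, f t := int_lb hc hf hxy.le
  simp only
  nlinarith

private lemma prim_surj {f : ℝ → ℝ} (hc : Continuous f) {a : ℝ} (ha : 0 < a)
    (hf : ∀ x, a ≤ f x) {t : ℝ} (ht : 0 ≤ t) :
    ∃ x, 0 ≤ x ∧ (∫ s in (0:ℝ)..x, f s) = t := by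
  set h : ℝ → ℝ := fun x => ∫ s in (0:ℝ)..x, f s with hh
  have hcont : Continuous h := continuous_primitive (fun a b => hc.intervalIntegrable a b) 0
  have h0 : h 0 = 0 := integral_same
  set R : ℝ := t / a + 1 with hR
  have hR0 : 0 ≤ R := by positivity
  have hRa : t ≤ h R := by
    have h2 : a * (R - 0) ≤ h R := int_lb hc hf hR0
    have : a * (R - 0) = t + a := by rw [hR]; field_simp; ring
    linarith
  have : t ∈ Icc (h 0) (h R) := ⟨by rw [h0]; exact ht, hRa⟩
  obtain ⟨x, hx, hxe⟩ := intermediate_value_Icc hR0 hcont.continuousOn this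
  exact ⟨x, hx.1, hxe⟩

private lemma sum_le_pack {f : ℝ → ℝ} (hc : Continuous f) (hf : ∀ x, 0 ≤ f x)
    {N : ℕ} (u v : Fin N → ℝ) (huv : ∀ i, u i ≤ v i) {A B : ℝ} (hAB : A ≤ B)
    (hsub : ∀ i, Set.Ioc (u i) (v i) ⊆ Set.Ioc A B)
    (hdisj : ∀ i j, i ≠ j → Disjoint (Set.Ioc (u i) (v i)) (Set.Ioc (u j) (v j))) :
    (∑ i, ∫ x in (u i)..(v i), f x) ≤ ∫ x in A..B, f x := by
  rw [integral_of_le hAB]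
  calc (∑ i, ∫ x in (u i)..(v i), f x)
      = ∑ i : Fin N, ∫ x in Set.Ioc (u i) (v i), f x :=
        Finset.sum_congr rfl (fun i _ => integral_of_le (huv i))
    _ = ∫ x in ⋃ i ∈ Finset.univ, Set.Ioc (u i) (v i), f x := by
        rw [MeasureTheory.integral_biUnion_finset Finset.univ
          (fun i _ => measurableSet_Ioc)
          (fun i _ j _ hij => hdisj i j hij)
          (fun i _ => (hc.integrableOn_Icc).mono_set Set.Ioc_subset_Icc_self)]
    _ ≤ ∫ x in Set.Ioc A B, f x := by
        apply setIntegral_mono_set ((hc.integrableOn_Icc).mono_set Set.Ioc_subset_Icc_self)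
          (Filter.Eventually.of_forall (fun x => hf x))
        exact (Set.iUnion₂_subset (fun i _ => hsub i)).eventuallyLE

/-- For the density `ρ(x) = |x|^p + a` (`p > 0`, `a > 0`), any finite collection of
pairwise disjoint closed intervals can be replaced by a single interval `[α, β]` with
`α ≤ 0 < β`, of the same total weighted mass and with weighted perimeter at most the
sum of the weighted perimeters of the original intervals. -/
theorem stmt_2 (p a : ℝ) (hp : 0 < p) (ha : 0 < a)
    (ρ : ℝ → ℝ) (hρ : ∀ x, ρ x = |x| ^ p + a)
    (N : ℕ) (hN : 0 < N) (α β : Fin N → ℝ) (hlt : ∀ i, α i < β i)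
    (hdisj : ∀ i j, i ≠ j →
      Disjoint (Set.Icc (α i) (β i)) (Set.Icc (α j) (β j))) :
    ∃ α' β' : ℝ, α' ≤ 0 ∧ 0 < β' ∧
      (∫ x in α'..β', ρ x) = ∑ i, ∫ x in (α i)..(β i), ρ x ∧
      ρ α' + ρ β' ≤ ∑ i, (ρ (α i) + ρ (β i)) := by
  -- basic facts about ρ
  have hc : Continuous ρ := by
    have he : ρ = fun x => |x| ^ p + a := funext hρ
    rw [he]
    exact (continuous_abs.rpow_const (fun x => Or.inr hp.le)).add continuous_const
  have hfa : ∀ x, a ≤ ρ x := fun x => by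
    rw [hρ]; nlinarith [Real.rpow_nonneg (abs_nonneg x) p]
  have hpos : ∀ x, 0 < ρ x := fun x => lt_of_lt_of_le ha (hfa x)
  have hmono : ∀ x y : ℝ, |x| ≤ |y| → ρ x ≤ ρ y := fun x y h => by
    rw [hρ, hρ]
    exact add_le_add_left (Real.rpow_le_rpow (abs_nonneg x) h hp.le) a
  have heven : ∀ u : ℝ, (∫ x in (-u)..(0:ℝ), ρ x) = ∫ x in (0:ℝ)..u, ρ x := by
    intro u
    have h1 := intervalIntegral.integral_comp_neg (a := (0:ℝ)) (b := u) ρ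
    have h2 : ∀ x : ℝ, ρ (-x) = ρ x := fun x => by rw [hρ, hρ, abs_neg]
    simp only [h2, neg_zero] at h1
    exact h1.symm
  -- extremal indices
  have hne : (Finset.univ : Finset (Fin N)).Nonempty := ⟨⟨0, hN⟩, Finset.mem_univ _⟩
  obtain ⟨i0, -, hi0⟩ := Finset.exists_min_image Finset.univ α hne
  obtain ⟨j0, -, hj0⟩ := Finset.exists_max_image Finset.univ β hne
  -- split points
  set c : Fin N → ℝ := fun i => max (α i) (min (β i) 0) with hc_def
  have hc1 : ∀ i, α i ≤ c i := fun i => le_max_left _ _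
  have hc2 : ∀ i, c i ≤ β i := fun i => max_le (hlt i).le ((min_le_left _ _))
  set Mm := ∑ i, ∫ x in (α i)..(c i), ρ x with hMm
  set Mp := ∑ i, ∫ x in (c i)..(β i), ρ x with hMp
  have hsplit : (∑ i, ∫ x in (α i)..(β i), ρ x) = Mm + Mp := by
    rw [hMm, hMp, ← Finset.sum_add_distrib]
    exact Finset.sum_congr rfl fun i _ =>
      (integral_add_adjacent_intervals (hc.intervalIntegrable _ _)
        (hc.intervalIntegrable _ _)).symm
  have hMmnn : 0 ≤ Mm :=
    Finset.sum_nonneg fun i _ => integral_nonneg (hc1 i) (fun x _ => (hpos x).le)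
  have hMpnn : 0 ≤ Mp :=
    Finset.sum_nonneg fun i _ => integral_nonneg (hc2 i) (fun x _ => (hpos x).le)
  have hMtot : 0 < Mm + Mp := by
    rw [← hsplit]
    refine Finset.sum_pos (fun i _ => ?_) hne
    have := int_lb hc hfa (hlt i).le
    nlinarith [hlt i]
  set D := max (-(α i0)) 0 with hD
  set E := max (β j0) 0 with hE
  have hD0 : 0 ≤ D := le_max_right _ _
  have hE0 : 0 ≤ E := le_max_right _ _
  have hDabs : D ≤ |α i0| := max_le (neg_le_abs _) (abs_nonneg _)
  have hEabs : E ≤ |β j0| := max_le (le_abs_self _) (abs_nonneg _)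
  -- packing inequalities
  have hP1 : Mm ≤ ∫ x in (0:ℝ)..D, ρ x := by
    rw [← heven D]
    refine sum_le_pack hc (fun x => (hpos x).le) α c hc1 (by linarith) (fun i => ?_)
      (fun i j hij => (hdisj i j hij).mono
        (Set.Ioc_subset_Icc_self.trans (Set.Icc_subset_Icc le_rfl (hc2 i)))
        (Set.Ioc_subset_Icc_self.trans (Set.Icc_subset_Icc le_rfl (hc2 j))))
    rintro x ⟨h1, h2⟩
    constructor
    · have : -D ≤ α i0 := neg_le.mpr (le_max_left _ _)
      have := hi0 i (Finset.mem_univ i)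
      linarith
    · rcases le_max_iff.mp h2 with h | h
      · linarith
      · exact h.trans (min_le_right _ _)
  have hP2 : Mp ≤ ∫ x in (0:ℝ)..E, ρ x := by
    refine sum_le_pack hc (fun x => (hpos x).le) c β hc2 hE0 (fun i => ?_)
      (fun i j hij => (hdisj i j hij).mono
        (Set.Ioc_subset_Icc_self.trans (Set.Icc_subset_Icc (hc1 i) le_rfl))
        (Set.Ioc_subset_Icc_self.trans (Set.Icc_subset_Icc (hc1 j) le_rfl)))
    rintro x ⟨h1, h2⟩
    constructor
    · rcases le_or_gt (β i) 0 with hb | hb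
      · have hci : min (β i) 0 ≤ c i := le_max_right _ _
        rw [min_eq_left hb] at hci
        linarith
      · have hci : min (β i) 0 ≤ c i := le_max_right _ _
        rw [min_eq_right hb.le] at hci
        linarith
    · have := hj0 i (Finset.mem_univ i)
      have : β i ≤ E := le_max_of_le_left (hj0 i (Finset.mem_univ i))
      linarith
  have hsm := prim_strictMono hc ha hfa
  have hg0 : (∫ s in (0:ℝ)..(0:ℝ), ρ s) = 0 := integral_same
  -- final sum bound pieces
  have s1 : ρ (α i0) ≤ ∑ i, ρ (α i) :=
    Finset.single_le_sum (fun i _ => (hpos (α i)).le) (Finset.mem_univ i0)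
  have s2 : ρ (β j0) ≤ ∑ i, ρ (β i) :=
    Finset.single_le_sum (fun i _ => (hpos (β i)).le) (Finset.mem_univ j0)
  have ssum : (∑ i, (ρ (α i) + ρ (β i))) = (∑ i, ρ (α i)) + ∑ i, ρ (β i) :=
    Finset.sum_add_distrib
  rcases lt_or_ge 0 Mp with hcase | hcase
  · -- both sides carry mass
    obtain ⟨u, hu0, hu⟩ := prim_surj hc ha hfa hMmnn
    obtain ⟨w, hw0, hw⟩ := prim_surj hc ha hfa hMpnn
    have hwpos : 0 < w := by
      have : (∫ s in (0:ℝ)..(0:ℝ), ρ s) < ∫ s in (0:ℝ)..w, ρ s := by rw [hg0, hw]; exact hcase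
      exact hsm.lt_iff_lt.mp this
    have huD : u ≤ D := by
      have : (∫ s in (0:ℝ)..u, ρ s) ≤ ∫ s in (0:ℝ)..D, ρ s := by rw [hu]; exact hP1
      exact hsm.le_iff_le.mp this
    have hwE : w ≤ E := by
      have : (∫ s in (0:ℝ)..w, ρ s) ≤ ∫ s in (0:ℝ)..E, ρ s := by rw [hw]; exact hP2
      exact hsm.le_iff_le.mp this
    refine ⟨-u, w, by linarith, hwpos, ?_, ?_⟩
    · rw [hsplit, ← integral_add_adjacent_intervals (a := -u) (b := 0) (c := w)
        (hc.intervalIntegrable _ _) (hc.intervalIntegrable _ _)] at *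
      rw [heven u, hu, hw]
    · have b1 : ρ (-u) ≤ ρ (α i0) := by
        apply hmono
        rw [abs_neg, abs_of_nonneg hu0]
        linarith
      have b2 : ρ w ≤ ρ (β j0) := by
        apply hmono
        rw [abs_of_nonneg hw0]
        linarith
      linarith
  · -- all mass is on the nonpositive side
    have hMp0 : Mp = 0 := le_antisymm hcase hMpnn
    obtain ⟨w, hw0, hw⟩ := prim_surj hc ha hfa hMtot.le
    have hwpos : 0 < w := by
      have : (∫ s in (0:ℝ)..(0:ℝ), ρ s) < ∫ s in (0:ℝ)..w, ρ s := by rw [hg0, hw]; exact hMtot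
      exact hsm.lt_iff_lt.mp this
    have hwD : w ≤ D := by
      have : (∫ s in (0:ℝ)..w, ρ s) ≤ ∫ s in (0:ℝ)..D, ρ s := by
        rw [hw]; rw [hMp0, add_zero]; exact hP1
      exact hsm.le_iff_le.mp this
    refine ⟨0, w, le_rfl, hwpos, ?_, ?_⟩
    · rw [hsplit, hw]
    · have b1 : ρ w ≤ ρ (α i0) := by
        apply hmono
        rw [abs_of_nonneg hw0]
        linarith
      have b2 : ρ 0 ≤ ρ (β j0) := by
        apply hmono
        rw [abs_zero]
        exact abs_nonneg _
      linarith
end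

section
/- Let ρ(x) = |x|^p + a with p > 1 and a > 0, let M₀ > 0, and suppose a ≥ a_crit where a_crit = ((p+1)/(4p))^(p/(p+1))·(p-1)^(-1/(p+1))·M₀^(p/(p+1)). Then there is a unique β̄ > 0 with 2β̄^(p+1)/(p+1) + 2aβ̄ = M₀, and for every pair (α, β) with α ≤ 0 ≤ β and |α|^(p+1)/(p+1) + β^(p+1)/(p+1) + a(|α| + β) = M₀, one has |α|^p + β^p + 2a ≥ 2β̄^p + 2a; that is, the symmetric interval [-β̄, β̄] has least weighted perimeter among all intervals of weighted mass M₀ that contain the origin. -/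
open Real Set Filter Topology

namespace Stmt3Aux

noncomputable def Gf (p a t : ℝ) : ℝ := |t| ^ p * t / (p + 1) + a * t

noncomputable def Gi (p a : ℝ) : ℝ → ℝ := Function.invFun (Gf p a)

variable {p a : ℝ}

lemma Gf_nonneg_eq (hp : 1 < p) (a : ℝ) {t : ℝ} (ht : 0 ≤ t) :
    Gf p a t = t ^ (p + 1) / (p + 1) + a * t := by
  unfold Gf
  rw [abs_of_nonneg ht]
  rcases eq_or_lt_of_le ht with h | h
  · rw [← h]
    rw [Real.zero_rpow (by linarith), Real.zero_rpow (by linarith)]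
    ring
  · rw [Real.rpow_add_one (ne_of_gt h)]

lemma Gf_zero (p a : ℝ) : Gf p a 0 = 0 := by simp [Gf]

lemma hasDerivAt_Gf (hp : 1 < p) (a : ℝ) (t : ℝ) :
    HasDerivAt (Gf p a) (|t| ^ p + a) t := by
  have hp1 : p + 1 ≠ 0 := by linarith
  rcases lt_trichotomy t 0 with ht | ht | ht
  · -- t < 0
    have h1 : HasDerivAt (fun s : ℝ => (-s) ^ p) (p * (-t) ^ (p - 1) * (-1)) t := by
      have := (Real.hasDerivAt_rpow_const (x := -t) (p := p) (Or.inl (by linarith))).comp t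
        (hasDerivAt_neg t)
      simpa [Function.comp_def] using this
    have h2 : HasDerivAt (fun s : ℝ => (-s) ^ p * s / (p + 1) + a * s)
        ((p * (-t) ^ (p - 1) * (-1) * t + (-t) ^ p * 1) / (p + 1) + a * 1) t :=
      ((h1.mul (hasDerivAt_id t)).div_const (p + 1)).add ((hasDerivAt_id t).const_mul a)
    have heq : (fun s : ℝ => (-s) ^ p * s / (p + 1) + a * s) =ᶠ[nhds t] Gf p a := by
      filter_upwards [eventually_lt_nhds ht] with s hs
      unfold Gf
      rw [abs_of_neg hs]
    have h3 := h2.congr_of_eventuallyEq heq.symm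
    have hkey : p * (-t) ^ (p - 1) * (-1) * t + (-t) ^ p * 1 = (p + 1) * (-t) ^ p := by
      have h4 : (-t) ^ (p - 1) * (-t) = (-t) ^ p := by
        rw [← Real.rpow_add_one (by linarith : (-t) ≠ 0)]
        norm_num
      nlinarith [h4]
    have : (p * (-t) ^ (p - 1) * (-1) * t + (-t) ^ p * 1) / (p + 1) + a * 1 = |t| ^ p + a := by
      rw [hkey, abs_of_neg ht]
      field_simp
    rwa [this] at h3
  · -- t = 0
    subst ht
    have habs : |(0:ℝ)| ^ p + a = a := by
      simp [Real.zero_rpow (by linarith : p ≠ 0)]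
    rw [habs]
    rw [hasDerivAt_iff_tendsto_slope]
    have heq : slope (Gf p a) 0 =ᶠ[𝓝[≠] (0:ℝ)] fun s => |s| ^ p / (p + 1) + a := by
      filter_upwards [self_mem_nhdsWithin] with s hs
      have hs0 : s ≠ 0 := hs
      rw [slope_def_field, Gf_zero]
      unfold Gf
      field_simp
      ring
    rw [tendsto_congr' heq]
    have hcont : Tendsto (fun s : ℝ => |s| ^ p / (p + 1) + a) (nhds 0) (nhds a) := by
      have h1 : ContinuousAt (fun s : ℝ => |s| ^ p) 0 := by
        exact continuous_abs.continuousAt.rpow_const (Or.inr (by linarith))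
      have h2 : ContinuousAt (fun s : ℝ => |s| ^ p / (p + 1) + a) 0 :=
        (h1.div_const _).add continuousAt_const
      have := h2.tendsto
      simpa [Real.zero_rpow (by linarith : p ≠ 0)] using this
    exact hcont.mono_left nhdsWithin_le_nhds
  · -- t > 0
    have h1 : HasDerivAt (fun s : ℝ => s ^ (p + 1) / (p + 1) + a * s)
        ((p + 1) * t ^ (p + 1 - 1) / (p + 1) + a * 1) t :=
      ((Real.hasDerivAt_rpow_const (x := t) (p := p + 1) (Or.inl (ne_of_gt ht))).div_const
        (p + 1)).add ((hasDerivAt_id t).const_mul a)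
    have heq : (fun s : ℝ => s ^ (p + 1) / (p + 1) + a * s) =ᶠ[nhds t] Gf p a := by
      filter_upwards [eventually_gt_nhds ht] with s hs
      rw [Gf_nonneg_eq hp a hs.le]
    have h2 := h1.congr_of_eventuallyEq heq.symm
    have : (p + 1) * t ^ (p + 1 - 1) / (p + 1) + a * 1 = |t| ^ p + a := by
      rw [abs_of_pos ht]
      field_simp
      simp
    rwa [this] at h2

lemma Gf_strictMono (hp : 1 < p) (ha : 0 < a) : StrictMono (Gf p a) :=
  strictMono_of_hasDerivAt_pos (fun t => hasDerivAt_Gf hp a t)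
    (fun t => by positivity)

lemma Gf_surjective (hp : 1 < p) (ha : 0 < a) : Function.Surjective (Gf p a) := by
  have hcont : Continuous (Gf p a) :=
    continuous_iff_continuousAt.2 fun t => (hasDerivAt_Gf hp a t).continuousAt
  refine hcont.surjective ?_ ?_
  · refine tendsto_atTop_mono' atTop ?_ (tendsto_id.const_mul_atTop ha)
    filter_upwards [eventually_ge_atTop (0:ℝ)] with t ht
    unfold Gf
    have : 0 ≤ |t| ^ p * t / (p + 1) := by positivity
    simp only [id]
    linarith
  · refine tendsto_atBot_mono' atBot ?_ (tendsto_id.const_mul_atBot ha)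
    filter_upwards [eventually_le_atBot (0:ℝ)] with t ht
    unfold Gf
    have h1 : |t| ^ p * t ≤ 0 := mul_nonpos_of_nonneg_of_nonpos (by positivity) ht
    have : |t| ^ p * t / (p + 1) ≤ 0 := div_nonpos_of_nonpos_of_nonneg h1 (by linarith)
    simp only [id]
    linarith

section GiFacts

variable (hp : 1 < p) (ha : 0 < a)
include hp ha

lemma Gi_right (m : ℝ) : Gf p a (Gi p a m) = m :=
  Function.invFun_eq (Gf_surjective hp ha m)

lemma Gi_left (t : ℝ) : Gi p a (Gf p a t) = t :=
  Function.leftInverse_invFun (Gf_strictMono hp ha).injective t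

lemma Gi_strictMono : StrictMono (Gi p a) := by
  intro m m' h
  by_contra hc
  push_neg at hc
  have := (Gf_strictMono hp ha).monotone hc
  rw [Gi_right hp ha, Gi_right hp ha] at this
  linarith

lemma Gi_surjective : Function.Surjective (Gi p a) :=
  fun t => ⟨Gf p a t, Gi_left hp ha t⟩

lemma Gi_continuous : Continuous (Gi p a) :=
  Monotone.continuous_of_surjective (Gi_strictMono hp ha).monotone (Gi_surjective hp ha)

lemma Gi_zero : Gi p a 0 = 0 := by
  have := Gi_left hp ha 0
  rwa [Gf_zero] at this

lemma Gi_nonneg {m : ℝ} (hm : 0 ≤ m) : 0 ≤ Gi p a m := by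
  have := (Gi_strictMono hp ha).monotone hm
  rwa [Gi_zero hp ha] at this

lemma Gi_pos {m : ℝ} (hm : 0 < m) : 0 < Gi p a m := by
  have := Gi_strictMono hp ha hm
  rwa [Gi_zero hp ha] at this

lemma hasDerivAt_Gi {m : ℝ} (hm : 0 ≤ m) :
    HasDerivAt (Gi p a) (((Gi p a m) ^ p + a)⁻¹) m := by
  have h := HasDerivAt.of_local_left_inverse (Gi_continuous hp ha).continuousAt
    (hasDerivAt_Gf hp a (Gi p a m)) (by positivity)
    (Eventually.of_forall (Gi_right hp ha))
  rwa [abs_of_nonneg (Gi_nonneg hp ha hm)] at h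

end GiFacts

-- ### critical mass estimates

lemma key3 (hp : 1 < p) : 2 * p ≤ (3:ℝ) ^ (p⁻¹) * (2 * p - 1) := by
  have hlog : 1 ≤ Real.log 3 := by
    rw [Real.le_log_iff_exp_le (by norm_num : (0:ℝ) < 3)]
    have := Real.exp_one_lt_d9
    linarith
  have hp0 : 0 < p := by linarith
  have h1 : (3:ℝ) ^ (p⁻¹) = Real.exp (Real.log 3 * p⁻¹) := by
    rw [Real.rpow_def_of_pos (by norm_num)]
  have h2 : 1 + Real.log 3 * p⁻¹ ≤ (3:ℝ) ^ (p⁻¹) := by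
    rw [h1]
    linarith [Real.add_one_le_exp (Real.log 3 * p⁻¹)]
  have h3 : (1:ℝ)/(2*p-1) ≤ Real.log 3 * p⁻¹ := by
    rw [div_le_iff₀ (by linarith)]
    calc (1:ℝ) = p⁻¹ * p := by field_simp
    _ ≤ (Real.log 3 * p⁻¹) * (2*p-1) := by
        rw [mul_comm (Real.log 3) p⁻¹, mul_assoc]
        apply mul_le_mul_of_nonneg_left _ (by positivity)
        nlinarith
  have h4 : 1 + 1/(2*p-1) ≤ (3:ℝ) ^ (p⁻¹) := by linarith
  have hne : 2*p-1 ≠ 0 := by linarith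
  calc 2*p = (1 + 1/(2*p-1)) * (2*p-1) := by field_simp; ring
  _ ≤ (3:ℝ) ^ (p⁻¹) * (2*p-1) := by
      apply mul_le_mul_of_nonneg_right h4 (by linarith)

lemma Gf_s_eq (hp : 1 < p) (ha : 0 < a) :
    Gf p a (((p-1)*a) ^ (p⁻¹)) = 4*p*a*(((p-1)*a) ^ (p⁻¹))/(2*(p+1)) := by
  have hb : (0:ℝ) < (p-1)*a := by nlinarith
  set s := ((p-1)*a) ^ (p⁻¹) with hs
  have hs0 : 0 < s := Real.rpow_pos_of_pos hb _
  have hsp : s ^ p = (p-1)*a := Real.rpow_inv_rpow hb.le (by linarith : p ≠ 0)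
  rw [Gf_nonneg_eq hp a hs0.le]
  have hsp1 : s ^ (p+1) = ((p-1)*a) * s := by
    rw [Real.rpow_add_one hs0.ne', hsp]
  rw [hsp1]
  have : p + 1 ≠ 0 := by linarith
  field_simp
  ring

lemma crit_step (hp : 1 < p) (ha : 0 < a) (hM : 0 < M₀)
    (hcrit : ((p + 1) / (4 * p)) ^ (p / (p + 1)) * (p - 1) ^ (-(1 / (p + 1))) *
        M₀ ^ (p / (p + 1)) ≤ a) :
    M₀ ≤ 2 * Gf p a (((p-1)*a) ^ (p⁻¹)) := by
  have hp0 : 0 < p := by linarith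
  have hp1 : (0:ℝ) < p + 1 := by linarith
  have hpm : (0:ℝ) < p - 1 := by linarith
  have hb : (0:ℝ) < (p-1)*a := by nlinarith
  set u := p/(p+1) with hu
  set w := (p+1)/p with hw
  have huw : u * w = 1 := by rw [hu, hw]; field_simp
  have hK1 : (0:ℝ) < (p+1)/(4*p) := by positivity
  have hL : (0:ℝ) ≤ ((p + 1) / (4 * p)) ^ u * (p - 1) ^ (-(1 / (p + 1))) * M₀ ^ u := by
    positivity
  have hmain := Real.rpow_le_rpow hL hcrit (by positivity : (0:ℝ) ≤ w)
  rw [Real.mul_rpow (by positivity) (by positivity), Real.mul_rpow (by positivity) (by positivity)]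
    at hmain
  rw [← Real.rpow_mul hK1.le, ← Real.rpow_mul hpm.le, ← Real.rpow_mul hM.le, huw,
    Real.rpow_one] at hmain
  have he1 : -(1/(p+1)) * w = -p⁻¹ := by rw [hw]; field_simp
  have he2 : a ^ w = a * a ^ p⁻¹ := by
    rw [hw]
    have : (p+1)/p = 1 + p⁻¹ := by field_simp
    rw [this, Real.rpow_add ha, Real.rpow_one]
  rw [he1, he2] at hmain
  -- hmain : ((p+1)/(4p))^1 * (p-1)^(-p⁻¹) * M₀ ≤ a * a^p⁻¹
  rw [Real.rpow_one] at hmain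
  have hmul := mul_le_mul_of_nonneg_right hmain
    (le_of_lt (Real.rpow_pos_of_pos hpm p⁻¹))
  have hcancel : (p-1) ^ (-p⁻¹) * (p-1) ^ (p⁻¹) = 1 := by
    rw [← Real.rpow_add hpm]
    simp
  have hsplit : ((p-1)*a) ^ p⁻¹ = (p-1) ^ p⁻¹ * a ^ p⁻¹ :=
    Real.mul_rpow hpm.le ha.le
  have hfin : (p+1)/(4*p) * M₀ ≤ a * (((p-1)*a) ^ p⁻¹) := by
    calc (p+1)/(4*p) * M₀
        = ((p+1)/(4*p) * (p-1) ^ (-p⁻¹) * M₀) * (p-1) ^ (p⁻¹) := by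
          rw [show ((p+1)/(4*p) * (p-1) ^ (-p⁻¹) * M₀) * (p-1) ^ (p⁻¹)
            = (p+1)/(4*p) * M₀ * ((p-1) ^ (-p⁻¹) * (p-1) ^ (p⁻¹)) from by ring,
            hcancel, mul_one]
    _ ≤ (a * a ^ p⁻¹) * (p-1) ^ (p⁻¹) := hmul
    _ = a * (((p-1)*a) ^ p⁻¹) := by rw [hsplit]; ring
  rw [Gf_s_eq hp ha]
  have hspos : (0:ℝ) < ((p-1)*a) ^ p⁻¹ := Real.rpow_pos_of_pos hb _
  have h2 : (p+1) * M₀ ≤ 4*p*(a * (((p-1)*a) ^ p⁻¹)) := by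
    have := mul_le_mul_of_nonneg_left hfin (by positivity : (0:ℝ) ≤ 4*p)
    calc (p+1)*M₀ = 4*p*((p+1)/(4*p)*M₀) := by field_simp
    _ ≤ 4*p*(a * (((p-1)*a) ^ p⁻¹)) := this
  rw [show 2 * (4*p*a*(((p-1)*a) ^ (p⁻¹))/(2*(p+1))) = 4*p*a*(((p-1)*a) ^ (p⁻¹))/(p+1) from by
    field_simp]
  rw [le_div_iff₀ (by positivity : (0:ℝ) < p+1)]
  nlinarith [h2]

lemma eta_bound (hp : 1 < p) (ha : 0 < a) (hM : 0 < M₀)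
    (hs : M₀ ≤ 2 * Gf p a (((p-1)*a) ^ (p⁻¹)))
    {t : ℝ} (ht : 0 ≤ t) (hGt : Gf p a t ≤ M₀) : t ^ p ≤ 3*((p-1)*a) := by
  have hp0 : 0 < p := by linarith
  have hp1 : (0:ℝ) < p + 1 := by linarith
  have hb : (0:ℝ) < (p-1)*a := by nlinarith
  by_contra hc
  push_neg at hc
  set σ := (3*((p-1)*a)) ^ (p⁻¹) with hσ
  have hσ0 : 0 < σ := Real.rpow_pos_of_pos (by linarith) _
  have hσp : σ ^ p = 3*((p-1)*a) := Real.rpow_inv_rpow (by linarith) (by linarith : p ≠ 0)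
  have htσ : σ < t := by
    by_contra htc
    push_neg at htc
    have := Real.rpow_le_rpow ht htc hp0.le
    rw [hσp] at this
    linarith
  have hmono := Gf_strictMono hp ha htσ
  have hGσ : Gf p a σ = σ * (3*((p-1)*a) + (p+1)*a) / (p+1) := by
    rw [Gf_nonneg_eq hp a hσ0.le, Real.rpow_add_one hσ0.ne', hσp]
    field_simp
  -- σ = 3^(1/p) * s
  set s := ((p-1)*a) ^ (p⁻¹) with hsdef
  have hs0 : 0 < s := Real.rpow_pos_of_pos hb _
  have hσs : σ = (3:ℝ) ^ (p⁻¹) * s := by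
    rw [hσ, Real.mul_rpow (by norm_num) hb.le]
  have hGs' : ∀ z : ℝ, 2*(4*p*a*z/(2*(p+1))) = 4*p*a*z/(p+1) := by
    intro z
    have : p + 1 ≠ 0 := by linarith
    field_simp
  have hGs : 2 * Gf p a s = 4*p*a*s/(p+1) := by
    rw [Gf_s_eq hp ha, hGs' s]
  have hkey := key3 hp
  -- σ*(3b+(p+1)a) = 3^(1/p) s (4p-2) a ≥ 4 p a s
  have h3 : 4*p*a*s ≤ σ * (3*((p-1)*a) + (p+1)*a) := by
    rw [hσs]
    have hexp : (3:ℝ) ^ (p⁻¹) * s * (3*((p-1)*a) + (p+1)*a)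
        = ((3:ℝ) ^ (p⁻¹) * (2*p - 1)) * (2 * a * s) := by ring
    rw [hexp]
    nlinarith [hkey, mul_pos ha hs0]
  have h4 : M₀ ≤ Gf p a σ := by
    rw [hGσ]
    rw [hGs] at hs
    calc M₀ ≤ 4*p*a*s/(p+1) := hs
    _ ≤ σ * (3*((p-1)*a) + (p+1)*a) / (p+1) := by gcongr
  linarith

lemma betabar_le (hp : 1 < p) (ha : 0 < a) (hM : 0 < M₀)
    (hs : M₀ ≤ 2 * Gf p a (((p-1)*a) ^ (p⁻¹))) :
    (Gi p a (M₀/2)) ^ p ≤ (p-1)*a := by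
  have hp0 : 0 < p := by linarith
  have hb : (0:ℝ) < (p-1)*a := by nlinarith
  set s := ((p-1)*a) ^ (p⁻¹) with hsdef
  have hs0 : 0 < s := Real.rpow_pos_of_pos hb _
  have hsp : s ^ p = (p-1)*a := Real.rpow_inv_rpow hb.le (by linarith : p ≠ 0)
  have h1 : Gi p a (M₀/2) ≤ s := by
    have h2 : Gf p a (Gi p a (M₀/2)) ≤ Gf p a s := by
      rw [Gi_right hp ha]
      linarith
    by_contra hc
    push_neg at hc
    exact absurd (Gf_strictMono hp ha hc) (by linarith)
  calc (Gi p a (M₀/2)) ^ p ≤ s ^ p :=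
        Real.rpow_le_rpow (Gi_nonneg hp ha (by linarith)) h1 hp0.le
  _ = (p-1)*a := hsp

-- ### the W function and its monotonicity

noncomputable def Wf (p a t : ℝ) : ℝ :=
  p * (t ^ (p-1) * (2*((p-1)*a)*t^p + a*((p-1)*a) - t^p*t^p)) / ((t^p*(t^p+a))^2*(t^p+a))

lemma Wf_hasDeriv_nonpos (hp : 1 < p) (ha : 0 < a) {t : ℝ} (ht : 0 < t)
    (h3 : t ^ p ≤ 3*((p-1)*a)) :
    ∃ d, HasDerivAt (Wf p a) d t ∧ d ≤ 0 := by
  have hp0 : 0 < p := by linarith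
  set b := (p-1)*a with hbdef
  have hb : 0 < b := by rw [hbdef]; nlinarith
  have he : HasDerivAt (fun t : ℝ => t ^ p) (p * t ^ (p-1)) t :=
    Real.hasDerivAt_rpow_const (Or.inl ht.ne')
  have hr : HasDerivAt (fun t : ℝ => t ^ (p-1)) ((p-1) * t ^ (p-1-1)) t :=
    Real.hasDerivAt_rpow_const (Or.inl ht.ne')
  have hN : HasDerivAt (fun t : ℝ => 2*b*t^p + a*b - t^p*t^p)
      (2*b*(p * t ^ (p-1)) - (p * t ^ (p-1) * t^p + t^p * (p * t ^ (p-1)))) t :=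
    ((he.const_mul (2*b)).add_const (a*b)).sub (he.mul he)
  have hU : HasDerivAt (fun t : ℝ => t ^ (p-1) * (2*b*t^p + a*b - t^p*t^p))
      ((p-1) * t ^ (p-1-1) * (2*b*t^p + a*b - t^p*t^p) +
        t ^ (p-1) * (2*b*(p * t ^ (p-1)) - (p * t ^ (p-1) * t^p + t^p * (p * t ^ (p-1))))) t :=
    hr.mul hN
  have hDin : HasDerivAt (fun t : ℝ => t^p*(t^p+a))
      (p * t ^ (p-1) * (t^p+a) + t^p * (p * t ^ (p-1))) t := by
    have := he.mul (he.add_const a)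
    exact this
  have hD : HasDerivAt (fun t : ℝ => (t^p*(t^p+a))^2*(t^p+a))
      ((2 * (t^p*(t^p+a)) ^ 1 * (p * t ^ (p-1) * (t^p+a) + t^p * (p * t ^ (p-1)))) * (t^p+a)
        + (t^p*(t^p+a))^2 * (p * t ^ (p-1))) t :=
    (hDin.pow 2).mul (he.add_const a)
  have he0 : 0 < t ^ p := Real.rpow_pos_of_pos ht p
  have hD0 : (t^p*(t^p+a))^2*(t^p+a) ≠ 0 := by positivity
  have hq : HasDerivAt (Wf p a)
      (((p * ((p-1) * t ^ (p-1-1) * (2*b*t^p + a*b - t^p*t^p) +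
        t ^ (p-1) * (2*b*(p * t ^ (p-1)) - (p * t ^ (p-1) * t^p + t^p * (p * t ^ (p-1)))))) *
        ((t^p*(t^p+a))^2*(t^p+a)) -
        (p * (t ^ (p-1) * (2*b*t^p + a*b - t^p*t^p))) *
        ((2 * (t^p*(t^p+a)) ^ 1 * (p * t ^ (p-1) * (t^p+a) + t^p * (p * t ^ (p-1)))) * (t^p+a)
          + (t^p*(t^p+a))^2 * (p * t ^ (p-1)))) / ((t^p*(t^p+a))^2*(t^p+a))^2) t := by
    have := (hU.const_mul p).div hD hD0
    unfold Wf
    simpa [Wf, hbdef, Pi.div_def] using this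
  refine ⟨_, hq, ?_⟩
  apply div_nonpos_of_nonpos_of_nonneg _ (by positivity)
  -- algebraic heart
  set e := t ^ p with hedef
  set r := t ^ (p-1) with hrdef
  set qq := t ^ (p-1-1) with hqdef
  have hrt : r * t = e := by
    rw [hrdef, hedef, ← Real.rpow_add_one ht.ne']
    norm_num
  have hqt : qq * t = r := by
    rw [hqdef, hrdef, ← Real.rpow_add_one ht.ne']
    norm_num
  have hr0 : 0 < r := Real.rpow_pos_of_pos ht _
  have hq0 : 0 < qq := Real.rpow_pos_of_pos ht _
  have ht2 : (0:ℝ) < t*t := by positivity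
  -- key factorization
  have hkey : (p * ((p-1) * qq * (2*b*e + a*b - e*e) +
        r * (2*b*(p * r) - (p * r * e + e * (p * r))))) *
        ((e*(e+a))^2*(e+a)) -
        (p * (r * (2*b*e + a*b - e*e))) *
        ((2 * (e*(e+a)) ^ 1 * (p * r * (e+a) + e * (p * r))) * (e+a)
          + (e*(e+a))^2 * (p * r))
      = p * (e*e*e*(e+a)*(e+a)/(t*t)) *
          ((2*p+1)*e*e*(e - 3*b) - (4*p+3)*a*b*e - (p+1)*a*a*b) := by
    have hrr : r = e / t := by field_simp [← hrt]; exact hrt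
    have hqq : qq = e / (t*t) := by
      rw [show qq = r / t from by field_simp [← hqt]; exact hqt, hrr]
      field_simp
    rw [hrr, hqq]
    field_simp
    ring
  rw [hkey]
  have hQ : (2*p+1)*e*e*(e - 3*b) - (4*p+3)*a*b*e - (p+1)*a*a*b ≤ 0 := by
    have h1 : (2*p+1)*e*e*(e - 3*b) ≤ 0 := by
      apply mul_nonpos_of_nonneg_of_nonpos
      · positivity
      · linarith
    nlinarith [mul_pos (mul_pos ha hb) he0, mul_pos (mul_pos ha ha) hb]
  have hpos : 0 < p * (e*e*e*(e+a)*(e+a)/(t*t)) := by positivity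
  exact mul_nonpos_of_nonneg_of_nonpos hpos.le hQ

lemma Wf_antitone (hp : 1 < p) (ha : 0 < a) {t₁ t₂ : ℝ} (h1 : 0 < t₁) (h12 : t₁ ≤ t₂)
    (h3 : t₂ ^ p ≤ 3*((p-1)*a)) : Wf p a t₂ ≤ Wf p a t₁ := by
  have hsub : ∀ t ∈ Icc t₁ t₂, ∃ d, HasDerivAt (Wf p a) d t ∧ d ≤ 0 := by
    intro t htm
    refine Wf_hasDeriv_nonpos hp ha (lt_of_lt_of_le h1 htm.1) ?_
    calc t ^ p ≤ t₂ ^ p := Real.rpow_le_rpow (by linarith [htm.1]) htm.2 (by linarith)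
    _ ≤ 3*((p-1)*a) := h3
  have hanti : AntitoneOn (Wf p a) (Icc t₁ t₂) := by
    apply antitoneOn_of_deriv_nonpos (convex_Icc t₁ t₂)
    · intro t htm
      obtain ⟨d, hd, _⟩ := hsub t htm
      exact hd.continuousAt.continuousWithinAt
    · intro t htm
      rw [interior_Icc] at htm
      obtain ⟨d, hd, _⟩ := hsub t ⟨htm.1.le, htm.2.le⟩
      exact hd.differentiableAt.differentiableWithinAt
    · intro t htm
      rw [interior_Icc] at htm
      obtain ⟨d, hd, hd0⟩ := hsub t ⟨htm.1.le, htm.2.le⟩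
      rw [hd.deriv]
      exact hd0
  exact hanti (left_mem_Icc.2 h12) (right_mem_Icc.2 h12) h12

-- ### the omega function

noncomputable def Om (p a t : ℝ) : ℝ := (t^p - (p-1)*a)/(t^p*(t^p+a))

lemma hasDerivAt_Om (hp : 1 < p) (ha : 0 < a) {t : ℝ} (ht : 0 < t) :
    HasDerivAt (Om p a) ((t^p + a) * Wf p a t) t := by
  have he : HasDerivAt (fun t : ℝ => t ^ p) (p * t ^ (p-1)) t :=
    Real.hasDerivAt_rpow_const (Or.inl ht.ne')
  have he0 : 0 < t ^ p := Real.rpow_pos_of_pos ht p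
  have hden : HasDerivAt (fun t : ℝ => t^p*(t^p+a))
      (p * t ^ (p-1) * (t^p+a) + t^p * (p * t ^ (p-1))) t := by
    have := he.mul (he.add_const a)
    exact this
  have hnum : HasDerivAt (fun t : ℝ => t^p - (p-1)*a) (p * t ^ (p-1)) t := he.sub_const _
  have hden0 : t^p*(t^p+a) ≠ 0 := by positivity
  have h := hnum.div hden hden0
  have heq : (p * t ^ (p-1) * (t^p*(t^p+a)) - (t^p - (p-1)*a) *
      (p * t ^ (p-1) * (t^p+a) + t^p * (p * t ^ (p-1)))) / (t^p*(t^p+a))^2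
      = (t^p + a) * Wf p a t := by
    unfold Wf
    have hρ : (0:ℝ) < t^p + a := by positivity
    field_simp
    ring
  rw [heq] at h
  exact h

lemma hasDerivAt_OmGi (hp : 1 < p) (ha : 0 < a) {m : ℝ} (hm : 0 < m) :
    HasDerivAt (fun m => Om p a (Gi p a m)) (Wf p a (Gi p a m)) m := by
  have hτ : 0 < Gi p a m := Gi_pos hp ha hm
  have h := (hasDerivAt_Om hp ha hτ).comp m (hasDerivAt_Gi hp ha hm.le)
  have hρ : (0:ℝ) < (Gi p a m)^p + a := by
    have : 0 < (Gi p a m) ^ p := Real.rpow_pos_of_pos hτ p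
    linarith
  have heq : ((Gi p a m)^p + a) * Wf p a (Gi p a m) * ((Gi p a m)^p + a)⁻¹
      = Wf p a (Gi p a m) := by
    field_simp
  rw [heq] at h
  exact h

lemma Om_center_nonpos (hp : 1 < p) (ha : 0 < a) (hM : 0 < M₀)
    (hs : M₀ ≤ 2 * Gf p a (((p-1)*a) ^ (p⁻¹))) :
    Om p a (Gi p a (M₀/2)) ≤ 0 := by
  have hτ : 0 < Gi p a (M₀/2) := Gi_pos hp ha (by linarith)
  have hnum : (Gi p a (M₀/2))^p - (p-1)*a ≤ 0 :=
    sub_nonpos.2 (betabar_le hp ha hM hs)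
  have hτp : 0 < (Gi p a (M₀/2))^p := Real.rpow_pos_of_pos hτ p
  exact div_nonpos_of_nonpos_of_nonneg hnum (by positivity)

lemma omega_pair (hp : 1 < p) (ha : 0 < a) (hM : 0 < M₀)
    (hs : M₀ ≤ 2 * Gf p a (((p-1)*a) ^ (p⁻¹)))
    {m₁ m₂ : ℝ} (h1 : 0 < m₁) (hm : m₁ + m₂ = M₀) (h12 : m₁ ≤ m₂) :
    Om p a (Gi p a m₁) + Om p a (Gi p a m₂) ≤ 0 := by
  have hc2 : m₁ ≤ M₀/2 := by linarith
  have hc3 : M₀/2 ≤ m₂ := by linarith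
  have hcen := Om_center_nonpos hp ha hM hs
  rcases eq_or_lt_of_le h12 with heq | hlt
  · have : m₁ = M₀/2 := by linarith [heq]
    rw [show m₂ = M₀/2 from by linarith [heq], this]
    linarith
  · -- concavity on [m₁, m₂]
    have hm2M : m₂ ≤ M₀ := by linarith
    have hconc : ConcaveOn ℝ (Icc m₁ m₂) (fun m => Om p a (Gi p a m)) := by
      have hsub : ∀ m ∈ Icc m₁ m₂, 0 < m := fun m hmm => lt_of_lt_of_le h1 hmm.1
      apply AntitoneOn.concaveOn_of_deriv (convex_Icc m₁ m₂)
      · intro m hmm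
        exact (hasDerivAt_OmGi hp ha (hsub m hmm)).continuousAt.continuousWithinAt
      · intro m hmm
        rw [interior_Icc] at hmm
        exact (hasDerivAt_OmGi hp ha (lt_trans h1 hmm.1)).differentiableAt.differentiableWithinAt
      · intro u hu v hv huv
        rw [interior_Icc] at hu hv
        rw [(hasDerivAt_OmGi hp ha (lt_trans h1 hu.1)).deriv,
          (hasDerivAt_OmGi hp ha (lt_trans h1 hv.1)).deriv]
        apply Wf_antitone hp ha (Gi_pos hp ha (lt_trans h1 hu.1))
          ((Gi_strictMono hp ha).monotone huv)
        apply eta_bound hp ha hM hs (Gi_nonneg hp ha (lt_trans h1 hv.1).le)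
        rw [Gi_right hp ha]
        linarith [hv.2]
    have hmid := hconc.2 (left_mem_Icc.2 h12) (right_mem_Icc.2 h12)
      (by norm_num : (0:ℝ) ≤ 1/2) (by norm_num : (0:ℝ) ≤ 1/2) (by norm_num)
    rw [smul_eq_mul, smul_eq_mul, smul_eq_mul, smul_eq_mul] at hmid
    have hmid2 : (1:ℝ)/2 * m₁ + 1/2 * m₂ = M₀/2 := by linarith
    rw [hmid2] at hmid
    linarith

-- ### the chi function

noncomputable def Xf (p a t : ℝ) : ℝ := t + a * t ^ (1-p)

lemma Xf_pos (hp : 1 < p) (ha : 0 < a) {t : ℝ} (ht : 0 < t) : 0 < Xf p a t := by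
  unfold Xf
  have : 0 < t ^ (1-p) := Real.rpow_pos_of_pos ht _
  positivity

lemma hasDerivAt_XfGi (hp : 1 < p) (ha : 0 < a) {m : ℝ} (hm : 0 < m) :
    HasDerivAt (fun m => Xf p a (Gi p a m)) (Om p a (Gi p a m)) m := by
  set τ := Gi p a m with hτdef
  have hτ : 0 < τ := Gi_pos hp ha hm
  have hτp : 0 < τ ^ p := Real.rpow_pos_of_pos hτ p
  have hX : HasDerivAt (Xf p a) (1 + a * ((1-p) * τ ^ (1-p-1))) τ := by
    have h1 : HasDerivAt (fun t : ℝ => t ^ (1-p)) ((1-p) * τ ^ (1-p-1)) τ :=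
      Real.hasDerivAt_rpow_const (Or.inl hτ.ne')
    exact (hasDerivAt_id τ).add (h1.const_mul a)
  have h := hX.comp m (hasDerivAt_Gi hp ha hm.le)
  have heq : (1 + a * ((1-p) * τ ^ (1-p-1))) * (τ^p + a)⁻¹ = Om p a τ := by
    unfold Om
    have hmp : τ ^ (1-p-1) * τ ^ p = 1 := by
      rw [← Real.rpow_add hτ]
      norm_num
    have hmp2 : τ ^ (1-p-1) = 1 / τ^p := by
      rw [eq_div_iff hτp.ne']
      exact hmp
    rw [hmp2]
    have hρ : (0:ℝ) < τ^p + a := by linarith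
    field_simp
    ring
  rw [heq] at h
  exact h

lemma chi_ge (hp : 1 < p) (ha : 0 < a) (hM : 0 < M₀)
    (hs : M₀ ≤ 2 * Gf p a (((p-1)*a) ^ (p⁻¹)))
    {m : ℝ} (h0 : 0 < m) (hm : m ≤ M₀/2) :
    Xf p a (Gi p a (M₀ - m)) ≤ Xf p a (Gi p a m) := by
  set δ₀ := M₀/2 - m with hδ₀
  have hδ00 : 0 ≤ δ₀ := by rw [hδ₀]; linarith
  set E : ℝ → ℝ := fun δ => Xf p a (Gi p a (M₀/2 - δ)) - Xf p a (Gi p a (M₀/2 + δ)) with hE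
  have hEd : ∀ δ ∈ Icc 0 δ₀, HasDerivAt E
      (-(Om p a (Gi p a (M₀/2 - δ))) - Om p a (Gi p a (M₀/2 + δ))) δ := by
    intro δ hδ
    have hpos1 : 0 < M₀/2 - δ := by
      rcases hδ with ⟨hδ1, hδ2⟩
      simp only [hδ₀] at hδ2
      linarith
    have hpos2 : 0 < M₀/2 + δ := by
      rcases hδ with ⟨hδ1, _⟩
      linarith
    have h1 : HasDerivAt (fun δ : ℝ => Xf p a (Gi p a (M₀/2 - δ)))
        (Om p a (Gi p a (M₀/2 - δ)) * (-1)) δ := by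
      have hin : HasDerivAt (fun δ : ℝ => M₀/2 - δ) (-1) δ := by
        simpa using (hasDerivAt_id δ).const_sub (M₀/2)
      exact (hasDerivAt_XfGi hp ha hpos1).comp δ hin
    have h2 : HasDerivAt (fun δ : ℝ => Xf p a (Gi p a (M₀/2 + δ)))
        (Om p a (Gi p a (M₀/2 + δ)) * 1) δ := by
      have hin : HasDerivAt (fun δ : ℝ => M₀/2 + δ) 1 δ := by
        simpa using (hasDerivAt_id δ).const_add (M₀/2)
      exact (hasDerivAt_XfGi hp ha hpos2).comp δ hin
    have h3 := h1.sub h2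
    have : Om p a (Gi p a (M₀ / 2 - δ)) * (-1) - Om p a (Gi p a (M₀ / 2 + δ)) * 1
        = -(Om p a (Gi p a (M₀/2 - δ))) - Om p a (Gi p a (M₀/2 + δ)) := by ring
    rw [this] at h3
    exact h3
  have hmono : MonotoneOn E (Icc 0 δ₀) := by
    apply monotoneOn_of_deriv_nonneg (convex_Icc 0 δ₀)
    · intro δ hδ
      exact (hEd δ hδ).continuousAt.continuousWithinAt
    · intro δ hδ
      rw [interior_Icc] at hδ
      exact (hEd δ ⟨hδ.1.le, hδ.2.le⟩).differentiableAt.differentiableWithinAt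
    · intro δ hδ
      rw [interior_Icc] at hδ
      rw [(hEd δ ⟨hδ.1.le, hδ.2.le⟩).deriv]
      have := omega_pair hp ha hM hs (m₁ := M₀/2 - δ) (m₂ := M₀/2 + δ)
        (by rcases hδ with ⟨h1', h2'⟩; simp only [hδ₀] at h2'; linarith)
        (by ring) (by rcases hδ with ⟨h1', _⟩; linarith)
      linarith
  have h0' := hmono (left_mem_Icc.2 hδ00) (right_mem_Icc.2 hδ00) hδ00
  have hE0 : E 0 = 0 := by simp [hE]
  rw [hE0] at h0'
  have e1 : M₀/2 - δ₀ = m := by rw [hδ₀]; ring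
  have e2 : M₀/2 + δ₀ = M₀ - m := by rw [hδ₀]; ring
  have hEδ₀ : E δ₀ = Xf p a (Gi p a m) - Xf p a (Gi p a (M₀ - m)) := by
    simp only [hE]
    rw [e1, e2]
  rw [hEδ₀] at h0'
  linarith

-- ### psi comparison

lemma psi_eq (hp : 1 < p) (ha : 0 < a) {t : ℝ} (ht : 0 < t) :
    p * t ^ (p-1) * (t^p + a)⁻¹ = p / Xf p a t := by
  have htp : 0 < t ^ p := Real.rpow_pos_of_pos ht p
  have hX : 0 < Xf p a t := Xf_pos hp ha ht
  have h1 : t ^ (1-p) * t ^ (p-1) = 1 := by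
    rw [← Real.rpow_add ht]
    norm_num
  have h2 : t * t ^ (p-1) = t ^ p := by
    nth_rewrite 1 [show t = t ^ (1:ℝ) from (Real.rpow_one t).symm]
    rw [← Real.rpow_add ht]
    norm_num
  have hkey : Xf p a t * t ^ (p-1) = t^p + a := by
    unfold Xf
    rw [add_mul, h2, mul_assoc, h1, mul_one]
  rw [eq_div_iff hX.ne']
  calc p * t ^ (p-1) * (t^p + a)⁻¹ * Xf p a t
      = p * (Xf p a t * t ^ (p-1)) * (t^p + a)⁻¹ := by ring
  _ = p * (t^p + a) * (t^p + a)⁻¹ := by rw [hkey]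
  _ = p := by field_simp

lemma psi_le (hp : 1 < p) (ha : 0 < a) (hM : 0 < M₀)
    (hs : M₀ ≤ 2 * Gf p a (((p-1)*a) ^ (p⁻¹)))
    {m : ℝ} (h0 : 0 < m) (hm : m ≤ M₀/2) :
    p * (Gi p a m) ^ (p-1) * ((Gi p a m)^p + a)⁻¹ ≤
      p * (Gi p a (M₀ - m)) ^ (p-1) * ((Gi p a (M₀ - m))^p + a)⁻¹ := by
  have hu : 0 < Gi p a m := Gi_pos hp ha h0
  have hv : 0 < Gi p a (M₀ - m) := Gi_pos hp ha (by linarith)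
  rw [psi_eq hp ha hu, psi_eq hp ha hv]
  have hchi := chi_ge hp ha hM hs h0 hm
  exact div_le_div_of_nonneg_left (by linarith) (Xf_pos hp ha hv) hchi

-- ### main inequality

lemma Gf_nonneg_of_nonneg (hp : 1 < p) (ha : 0 < a) {x : ℝ} (hx : 0 ≤ x) :
    0 ≤ Gf p a x := by
  have := (Gf_strictMono hp ha).monotone hx
  rwa [Gf_zero] at this

lemma main_ineq (hp : 1 < p) (ha : 0 < a) (hM : 0 < M₀)
    (hs : M₀ ≤ 2 * Gf p a (((p-1)*a) ^ (p⁻¹)))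
    {x y : ℝ} (hx : 0 ≤ x) (hy : 0 ≤ y)
    (hmass : Gf p a x + Gf p a y = M₀) (hxy : Gf p a x ≤ Gf p a y) :
    2 * (Gi p a (M₀/2)) ^ p ≤ x ^ p + y ^ p := by
  have hp0 : 0 < p := by linarith
  set F : ℝ → ℝ := fun m => (Gi p a m) ^ p + (Gi p a (M₀ - m)) ^ p with hF
  have hFd : ∀ m ∈ Ioo (0:ℝ) (M₀/2), HasDerivAt F
      (p * (Gi p a m) ^ (p-1) * ((Gi p a m)^p + a)⁻¹ -
        p * (Gi p a (M₀ - m)) ^ (p-1) * ((Gi p a (M₀ - m))^p + a)⁻¹) m := by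
    intro m hmm
    have hu : 0 < Gi p a m := Gi_pos hp ha hmm.1
    have hvm : 0 < M₀ - m := by have := hmm.2; linarith
    have hv : 0 < Gi p a (M₀ - m) := Gi_pos hp ha hvm
    have h1 : HasDerivAt (fun m => (Gi p a m) ^ p)
        (p * (Gi p a m) ^ (p-1) * ((Gi p a m)^p + a)⁻¹) m := by
      have := (Real.hasDerivAt_rpow_const (x := Gi p a m) (p := p)
        (Or.inl hu.ne')).comp m (hasDerivAt_Gi hp ha hmm.1.le)
      simpa [mul_assoc, Function.comp_def] using this
    have h2 : HasDerivAt (fun m => (Gi p a (M₀ - m)) ^ p)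
        (-(p * (Gi p a (M₀ - m)) ^ (p-1) * ((Gi p a (M₀ - m))^p + a)⁻¹)) m := by
      have hin : HasDerivAt (fun m : ℝ => M₀ - m) (-1) m := by
        simpa using (hasDerivAt_id m).const_sub M₀
      have houter : HasDerivAt (fun z => (Gi p a z) ^ p)
          (p * (Gi p a (M₀ - m)) ^ (p-1) * ((Gi p a (M₀ - m))^p + a)⁻¹) (M₀ - m) := by
        have := (Real.hasDerivAt_rpow_const (x := Gi p a (M₀ - m)) (p := p)
          (Or.inl hv.ne')).comp (M₀ - m) (hasDerivAt_Gi hp ha hvm.le)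
        simpa [mul_assoc, Function.comp_def] using this
      have := houter.comp m hin
      simpa [Function.comp_def] using this
    have := h1.add h2
    have heq : p * (Gi p a m) ^ (p-1) * ((Gi p a m)^p + a)⁻¹ +
        -(p * (Gi p a (M₀ - m)) ^ (p-1) * ((Gi p a (M₀ - m))^p + a)⁻¹)
        = p * (Gi p a m) ^ (p-1) * ((Gi p a m)^p + a)⁻¹ -
        p * (Gi p a (M₀ - m)) ^ (p-1) * ((Gi p a (M₀ - m))^p + a)⁻¹ := by ring
    rw [heq] at this
    exact this
  have hanti : AntitoneOn F (Icc 0 (M₀/2)) := by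
    apply antitoneOn_of_deriv_nonpos (convex_Icc 0 (M₀/2))
    · -- continuity
      have hc1 : ContinuousOn (fun m => (Gi p a m) ^ p) (Icc 0 (M₀/2)) := by
        apply ContinuousOn.rpow_const (Gi_continuous hp ha).continuousOn
        intro m _
        right; exact hp0.le
      have hc2 : ContinuousOn (fun m => (Gi p a (M₀ - m)) ^ p) (Icc 0 (M₀/2)) := by
        apply ContinuousOn.rpow_const
        · exact ((Gi_continuous hp ha).comp (continuous_const.sub continuous_id)).continuousOn
        · intro m _
          right; exact hp0.le
      exact hc1.add hc2
    · intro m hmm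
      rw [interior_Icc] at hmm
      exact (hFd m hmm).differentiableAt.differentiableWithinAt
    · intro m hmm
      rw [interior_Icc] at hmm
      rw [(hFd m hmm).deriv]
      have := psi_le hp ha hM hs hmm.1 hmm.2.le
      linarith
  set mx := Gf p a x with hmx
  have hmx0 : 0 ≤ mx := Gf_nonneg_of_nonneg hp ha hx
  have hmxc : mx ≤ M₀/2 := by
    have : mx + Gf p a y = M₀ := hmass
    simp only [hmx] at *
    linarith
  have happ := hanti (mem_Icc.2 ⟨hmx0, hmxc⟩) (mem_Icc.2 ⟨by linarith, le_refl _⟩) hmxc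
  have hFmx : F mx = x ^ p + y ^ p := by
    simp only [hF]
    rw [hmx, Gi_left hp ha]
    have : M₀ - Gf p a x = Gf p a y := by linarith
    rw [this, Gi_left hp ha]
  have hFc : F (M₀/2) = 2 * (Gi p a (M₀/2)) ^ p := by
    simp only [hF]
    rw [show M₀ - M₀/2 = M₀/2 from by ring]
    ring
  rw [hFmx, hFc] at happ
  exact happ

end Stmt3Aux

/-- For the density `ρ(x) = |x|^p + a` with `p > 1` and `a ≥ a_crit`, the symmetric
interval `[-β̄, β̄]` of weighted mass `M₀` has least weighted perimeter among all
intervals of weighted mass `M₀` containing the origin. -/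
theorem stmt_3 (p a M₀ : ℝ) (hp : 1 < p) (ha : 0 < a) (hM : 0 < M₀)
    (hcrit : ((p + 1) / (4 * p)) ^ (p / (p + 1)) * (p - 1) ^ (-(1 / (p + 1))) *
        M₀ ^ (p / (p + 1)) ≤ a) :
    ∃ βbar : ℝ, 0 < βbar ∧
      2 * βbar ^ (p + 1) / (p + 1) + 2 * a * βbar = M₀ ∧
      (∀ b : ℝ, 0 < b → 2 * b ^ (p + 1) / (p + 1) + 2 * a * b = M₀ → b = βbar) ∧
      (∀ α β : ℝ, α ≤ 0 → 0 ≤ β →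
        |α| ^ (p + 1) / (p + 1) + β ^ (p + 1) / (p + 1) + a * (|α| + β) = M₀ →
        2 * βbar ^ p + 2 * a ≤ |α| ^ p + β ^ p + 2 * a) := by
  open Stmt3Aux in
  have hs : M₀ ≤ 2 * Gf p a (((p-1)*a) ^ (p⁻¹)) := crit_step hp ha hM hcrit
  set βbar := Stmt3Aux.Gi p a (M₀/2) with hβ
  have hβpos : 0 < βbar := Stmt3Aux.Gi_pos hp ha (by linarith)
  have hβeq : Stmt3Aux.Gf p a βbar = M₀/2 := Stmt3Aux.Gi_right hp ha _
  have hgf : ∀ t : ℝ, 0 ≤ t → Stmt3Aux.Gf p a t = t ^ (p+1)/(p+1) + a*t :=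
    fun t ht => Stmt3Aux.Gf_nonneg_eq hp a ht
  refine ⟨βbar, hβpos, ?_, ?_, ?_⟩
  · have := hgf βbar hβpos.le
    rw [this] at hβeq
    field_simp at hβeq ⊢
    linarith
  · intro b hb hbeq
    have hGb : Stmt3Aux.Gf p a b = M₀/2 := by
      rw [hgf b hb.le]
      field_simp at hbeq ⊢
      linarith
    have := (Stmt3Aux.Gf_strictMono hp ha).injective (hGb.trans hβeq.symm)
    exact this
  · intro α β hα hβ0 hmass
    have hx : 0 ≤ |α| := abs_nonneg α
    have hmass' : Stmt3Aux.Gf p a |α| + Stmt3Aux.Gf p a β = M₀ := by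
      rw [hgf _ hx, hgf _ hβ0]
      linarith [hmass]
    have hmain : 2 * βbar ^ p ≤ |α| ^ p + β ^ p := by
      rcases le_total (Stmt3Aux.Gf p a |α|) (Stmt3Aux.Gf p a β) with hle | hle
      · exact Stmt3Aux.main_ineq hp ha hM hs hx hβ0 hmass' hle
      · have := Stmt3Aux.main_ineq hp ha hM hs hβ0 hx (by linarith) hle
        linarith
    linarith
end

section
/- Let ρ(x) = x² + a with a > 0, let M₀ > 0, and suppose 0 < a ≤ a_crit := (1/4)·(3M₀)^(2/3). Then the minimum of the weighted perimeter α² + β² + 2a over all pairs (α, β) with α ≤ 0 ≤ β and β³/3 + aβ + |α|³/3 + a|α| = M₀ equals (3M₀)^(2/3) (in particular it is independent of a), and it is attained at β = (1/2)·[√((3M₀)^(2/3) - 4a) + (3M₀)^(1/3)] and α = -a/β, so that αβ = -a. -/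
/-- For the density `ρ(x) = x² + a` with `0 < a ≤ (1/4)(3M₀)^(2/3)`, the minimum
weighted perimeter `α² + β² + 2a` over intervals `[α, β]` (with `α ≤ 0 ≤ β`) of
weighted mass `M₀` equals `(3M₀)^(2/3)` (independent of `a`), attained at
`β = (1/2)(√((3M₀)^(2/3) - 4a) + (3M₀)^(1/3))` and `α = -a/β`, so `αβ = -a`. -/
theorem stmt_4 (a M₀ : ℝ) (ha : 0 < a) (hM : 0 < M₀)
    (hcrit : a ≤ (1 / 4) * (3 * M₀) ^ ((2 : ℝ) / 3)) :
    (∀ α β : ℝ, α ≤ 0 → 0 ≤ β →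
      β ^ 3 / 3 + a * β + |α| ^ 3 / 3 + a * |α| = M₀ →
      (3 * M₀) ^ ((2 : ℝ) / 3) ≤ α ^ 2 + β ^ 2 + 2 * a) ∧
    (let β₀ : ℝ := (1 / 2) *
        (Real.sqrt ((3 * M₀) ^ ((2 : ℝ) / 3) - 4 * a) + (3 * M₀) ^ ((1 : ℝ) / 3));
     let α₀ : ℝ := -a / β₀;
     α₀ ≤ 0 ∧ 0 ≤ β₀ ∧
      β₀ ^ 3 / 3 + a * β₀ + |α₀| ^ 3 / 3 + a * |α₀| = M₀ ∧
      α₀ ^ 2 + β₀ ^ 2 + 2 * a = (3 * M₀) ^ ((2 : ℝ) / 3) ∧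
      α₀ * β₀ = -a) := by
  have h3M : (0:ℝ) < 3 * M₀ := by linarith
  set c : ℝ := (3 * M₀) ^ ((1 : ℝ) / 3) with hc_def
  have hc : 0 < c := Real.rpow_pos_of_pos h3M _
  have hc3 : c ^ 3 = 3 * M₀ := by
    rw [hc_def, ← Real.rpow_natCast ((3 * M₀) ^ ((1:ℝ)/3)) 3,
      ← Real.rpow_mul h3M.le]
    norm_num
  have hc2 : (3 * M₀) ^ ((2 : ℝ) / 3) = c ^ 2 := by
    rw [hc_def, ← Real.rpow_natCast ((3 * M₀) ^ ((1:ℝ)/3)) 2,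
      ← Real.rpow_mul h3M.le]
    norm_num
  rw [hc2] at hcrit ⊢
  constructor
  · intro α β hα hβ hmass
    rw [abs_of_nonpos hα] at hmass
    have hs : 0 < β - α := by
      rcases lt_or_eq_of_le hα with h | h
      · linarith
      rcases lt_or_eq_of_le hβ with h' | h'
      · linarith
      · exfalso; subst h; subst h'; norm_num at hmass; linarith
    nlinarith [sq_nonneg (β - α - c), sq_nonneg (β - α + c),
      mul_nonneg (sq_nonneg (β - α - c)) (by linarith : (0:ℝ) ≤ β - α + 2 * c),
      mul_pos hs hc]
  · set s : ℝ := Real.sqrt (c ^ 2 - 4 * a) with hs_def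
    have hs0 : 0 ≤ s := Real.sqrt_nonneg _
    have hs2 : s ^ 2 = c ^ 2 - 4 * a := Real.sq_sqrt (by linarith)
    set β₀ : ℝ := (1 / 2) * (s + c) with hβ₀
    have hβpos : 0 < β₀ := by rw [hβ₀]; positivity
    have hquad : β₀ ^ 2 = c * β₀ - a := by rw [hβ₀]; nlinarith
    set α₀ : ℝ := -a / β₀ with hα₀
    have hαneg : α₀ ≤ 0 := by
      rw [hα₀]; apply div_nonpos_of_nonpos_of_nonneg <;> linarith
    have habs : |α₀| = a / β₀ := by
      rw [abs_of_nonpos hαneg, hα₀]; ring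
    have ha' : a = c * β₀ - β₀ ^ 2 := by linarith
    have key : a / β₀ = c - β₀ := by
      field_simp
      linear_combination ha'
    have h1 : -a / β₀ = β₀ - c := by
      field_simp
      linear_combination -ha'
    refine ⟨hαneg, hβpos.le, ?_, ?_, ?_⟩
    · rw [habs, key]
      have hM' : M₀ = c ^ 3 / 3 := by linarith
      rw [hM']
      linear_combination c * ha'
    · rw [h1]
      linear_combination 2 * hquad
    · field_simp
end

section
/- Let ρ(x) = x² + a with a > 0, let M₀ > 0, and suppose a ≥ a_crit := (1/4)·(3M₀)^(2/3). Set k = ((3M₀ + √(9M₀² + 16a³))/4)^(2/3), so that 4k^(3/2) = 3M₀ + √(9M₀² + 16a³). Then the minimum of the weighted perimeter α² + β² + 2a over all pairs (α, β) with α ≤ 0 ≤ β and β³/3 + aβ + |α|³/3 + a|α| = M₀ equals 2k + 2a²/k - 2a, and it is attained at the symmetric interval with β = -α = √k - a/√k. -/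
private lemma sq_eq_of_nonneg' {x y : ℝ} (hx : 0 ≤ x) (hy : 0 ≤ y) (h : x ^ 2 = y ^ 2) :
    x = y := by
  rw [← Real.sqrt_sq hx, ← Real.sqrt_sq hy, h]

private lemma helper_min (a b u v : ℝ) (ha : 0 < a) (hb0 : 0 < b) (hb2a : b ^ 2 ≤ a)
    (hu0 : 0 ≤ u) (hv0 : 0 ≤ v)
    (hmass : v ^ 3 / 3 + a * v + u ^ 3 / 3 + a * u = 2 * (b ^ 3 / 3 + a * b)) :
    2 * b ^ 2 ≤ u ^ 2 + v ^ 2 := by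
  set S := u + v with hSdef
  clear_value S
  have hS0 : 0 < S := by
    rcases lt_or_eq_of_le (add_nonneg hu0 hv0) with h | h
    · rw [hSdef]; linarith
    · exfalso
      have hu' : u = 0 := by linarith
      have hv' : v = 0 := by linarith
      rw [hu', hv'] at hmass
      nlinarith [pow_pos hb0 3, mul_pos ha hb0]
  have hkey : S * (u ^ 2 + v ^ 2) = S ^ 3 / 3 - 2 * a * S + 4 * b ^ 3 / 3 + 4 * a * b := by
    rw [hSdef]; linear_combination 2 * hmass
  have hSle : S ≤ 2 * b := by
    by_contra h
    push_neg at h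
    have hS12 : S ^ 3 / 12 + a * S ≤ 2 * b ^ 3 / 3 + 2 * a * b := by
      rw [hSdef]
      nlinarith [mul_nonneg (add_nonneg hu0 hv0) (sq_nonneg (u - v)), hmass]
    have h3 : (2 * b) ^ 3 < S ^ 3 := pow_lt_pow_left₀ h (by positivity) (by norm_num)
    nlinarith [mul_lt_mul_of_pos_left h ha]
  have hfac : 0 ≤ (2 * b - S) * (2 * a + (2 * b) ^ 2 / 6 - S ^ 2 / 3 - (2 * b) * S / 3) := by
    apply mul_nonneg (by linarith)
    have hS2 : S ^ 2 ≤ (2 * b) ^ 2 := pow_le_pow_left₀ hS0.le hSle 2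
    have hSb : S * b ≤ 2 * b * b := mul_le_mul_of_nonneg_right hSle hb0.le
    nlinarith [hb2a]
  have hmul : 2 * b ^ 2 * S ≤ (u ^ 2 + v ^ 2) * S := by
    nlinarith [hfac, hkey]
  exact le_of_mul_le_mul_right hmul hS0

set_option maxHeartbeats 1000000 in
/-- For the density `ρ(x) = x² + a` with `a ≥ (1/4)(3M₀)^(2/3)`, and
`k = ((3M₀ + √(9M₀² + 16a³))/4)^(2/3)`, the minimum weighted perimeter
`α² + β² + 2a` over intervals `[α, β]` (with `α ≤ 0 ≤ β`) of weighted mass `M₀`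
equals `2k + 2a²/k - 2a`, attained at the symmetric interval with
`β = -α = √k - a/√k`. -/
theorem stmt_5 (a M₀ : ℝ) (ha : 0 < a) (hM : 0 < M₀)
    (hcrit : (1 / 4) * (3 * M₀) ^ ((2 : ℝ) / 3) ≤ a) :
    let k : ℝ := ((3 * M₀ + Real.sqrt (9 * M₀ ^ 2 + 16 * a ^ 3)) / 4) ^ ((2 : ℝ) / 3);
    4 * k ^ ((3 : ℝ) / 2) = 3 * M₀ + Real.sqrt (9 * M₀ ^ 2 + 16 * a ^ 3) ∧
    (∀ α β : ℝ, α ≤ 0 → 0 ≤ β →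
      β ^ 3 / 3 + a * β + |α| ^ 3 / 3 + a * |α| = M₀ →
      2 * k + 2 * a ^ 2 / k - 2 * a ≤ α ^ 2 + β ^ 2 + 2 * a) ∧
    (let β₀ : ℝ := Real.sqrt k - a / Real.sqrt k;
     let α₀ : ℝ := -β₀;
     α₀ ≤ 0 ∧ 0 ≤ β₀ ∧
      β₀ ^ 3 / 3 + a * β₀ + |α₀| ^ 3 / 3 + a * |α₀| = M₀ ∧
      α₀ ^ 2 + β₀ ^ 2 + 2 * a = 2 * k + 2 * a ^ 2 / k - 2 * a) := by
  intro k
  have hD0 : 0 ≤ Real.sqrt (9 * M₀ ^ 2 + 16 * a ^ 3) := Real.sqrt_nonneg _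
  set D := Real.sqrt (9 * M₀ ^ 2 + 16 * a ^ 3) with hDdef
  have hD2 : D ^ 2 = 9 * M₀ ^ 2 + 16 * a ^ 3 := Real.sq_sqrt (by positivity)
  set t := (3 * M₀ + D) / 4 with htdef
  have ht0 : 0 < t := by rw [htdef]; positivity
  have hkdef : k = t ^ ((2:ℝ)/3) := rfl
  set s := Real.sqrt k with hsdef
  have hs2 : s ^ 2 = k := Real.sq_sqrt (by rw [hkdef]; positivity)
  set b := s - a / s with hbdef
  clear_value k D t s b
  have hk0 : 0 ≤ k := by rw [hkdef]; positivity
  have hk3 : k ^ 3 = t ^ 2 := by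
    rw [hkdef, ← Real.rpow_natCast (t ^ ((2:ℝ)/3)) 3, ← Real.rpow_mul ht0.le,
      show ((2:ℝ)/3 * ((3:ℕ):ℝ)) = ((2:ℕ):ℝ) by norm_num, Real.rpow_natCast]
  have hta : a ^ 3 < t ^ 2 := by
    rw [htdef]
    nlinarith [hD2, mul_nonneg hM.le hD0, sq_nonneg M₀, hM]
  have hak : a < k := by
    by_contra h
    push_neg at h
    have h3 := pow_le_pow_left₀ hk0 h 3
    linarith [hk3 ▸ h3]
  have hkpos : 0 < k := lt_trans ha hak
  have hk32 : k ^ ((3:ℝ)/2) = t := by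
    rw [hkdef, ← Real.rpow_mul ht0.le, show ((2:ℝ)/3 * (3/2)) = 1 by norm_num,
      Real.rpow_one]
  have hs0 : 0 < s := by rw [hsdef]; exact Real.sqrt_pos.2 hkpos
  have hsne : s ≠ 0 := ne_of_gt hs0
  have hs3 : s ^ 3 = t := by
    apply sq_eq_of_nonneg' (by positivity) ht0.le
    rw [← hk3, ← hs2]; ring
  have htq : 2 * t ^ 2 = 3 * M₀ * t + 2 * a ^ 3 := by
    rw [htdef]; linear_combination hD2 / 8
  have hb0 : 0 < b := by
    have hss : s * s = k := by rw [← hs2]; ring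
    rw [hbdef, sub_pos, div_lt_iff₀ hs0, hss]
    exact hak
  have hmassb : b ^ 3 / 3 + a * b = M₀ / 2 := by
    rw [hbdef]
    field_simp
    linear_combination htq + (2 * (s ^ 3 + t) - 3 * M₀) * hs3
  have hb2 : b ^ 2 = k + a ^ 2 / k - 2 * a := by
    rw [hbdef]
    field_simp
    rw [← hs2]
    ring
  -- b² ≤ a from criticality
  have hsa2 : Real.sqrt a ^ 2 = a := Real.sq_sqrt ha.le
  have h8 : 3 * M₀ ≤ 8 * (a * Real.sqrt a) := by
    have h1 : (3 * M₀) ^ ((2:ℝ)/3) ≤ 4 * a := by linarith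
    have h2 : ((3 * M₀) ^ ((2:ℝ)/3)) ^ ((3:ℝ)/2) ≤ (4 * a) ^ ((3:ℝ)/2) :=
      Real.rpow_le_rpow (Real.rpow_nonneg (by positivity) _) h1 (by norm_num)
    have h3 : ((3 * M₀) ^ ((2:ℝ)/3)) ^ ((3:ℝ)/2) = 3 * M₀ := by
      rw [← Real.rpow_mul (by positivity), show ((2:ℝ)/3 * (3/2)) = 1 by norm_num,
        Real.rpow_one]
    have h4 : (4 * a) ^ ((3:ℝ)/2) = 8 * (a * Real.sqrt a) := by
      apply sq_eq_of_nonneg' (Real.rpow_nonneg (by positivity) _) (by positivity)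
      rw [← Real.rpow_natCast ((4*a) ^ ((3:ℝ)/2)) 2, ← Real.rpow_mul (by positivity),
        show ((3:ℝ)/2 * ((2:ℕ):ℝ)) = ((3:ℕ):ℝ) by norm_num, Real.rpow_natCast]
      linear_combination (-64 * a ^ 2) * hsa2
    rw [h3, h4] at h2
    exact h2
  have hble : b ≤ Real.sqrt a := by
    by_contra h
    push_neg at h
    have h3 : Real.sqrt a ^ 3 < b ^ 3 := pow_lt_pow_left₀ h (Real.sqrt_nonneg a) (by norm_num)
    have h5 : Real.sqrt a ^ 3 = a * Real.sqrt a := by rw [pow_succ, hsa2]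
    have h6 : a * Real.sqrt a < a * b := mul_lt_mul_of_pos_left h ha
    linarith
  have hb2a : b ^ 2 ≤ a := by
    have h7 := pow_le_pow_left₀ hb0.le hble 2
    rwa [hsa2] at h7
  refine ⟨?_, ?_, ?_⟩
  · rw [hk32, htdef]; ring
  · intro α β hα hβ hmass
    have huabs : |α| = -α := abs_of_nonpos hα
    rw [huabs] at hmass
    have hm2 : β ^ 3 / 3 + a * β + (-α) ^ 3 / 3 + a * (-α) = 2 * (b ^ 3 / 3 + a * b) := by
      linear_combination hmass - 2 * hmassb
    have key : 2 * b ^ 2 ≤ (-α) ^ 2 + β ^ 2 :=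
      helper_min a b (-α) β ha hb0 hb2a (by linarith) hβ hm2
    have hα2 : α ^ 2 = (-α) ^ 2 := by ring
    have hk2 : 2 * k + 2 * a ^ 2 / k - 4 * a = 2 * b ^ 2 := by rw [hb2]; ring
    linarith [hα2 ▸ key]
  · intro β₀ α₀
    have hβ₀ : β₀ = b := rfl
    have hα₀ : α₀ = -b := by rw [← hβ₀]
    rw [hβ₀, hα₀]
    refine ⟨by linarith, by linarith, ?_, ?_⟩
    · rw [abs_neg, abs_of_nonneg hb0.le]
      linarith [hmassb]
    · have h2 : (-b) ^ 2 = b ^ 2 := by ring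
      rw [h2, hb2]; ring
end

section
/- Let ρ(x) = |x|^p + a with 0 < p < 1 and a > 0, and let M₀ > 0. Then there is a unique β > 0 satisfying β^(p+1) = (p+1)(M₀ - aβ), and for every pair (α', β') with α' ≤ 0 ≤ β' and |α'|^(p+1)/(p+1) + β'^(p+1)/(p+1) + a(|α'| + β') = M₀, one has |α'|^p + β'^p + 2a ≥ β^p + 2a; that is, the interval [0, β] with one end at the origin has least weighted perimeter, equal to β^p + 2a, among intervals of weighted mass M₀ that contain the origin. -/
open Real

private lemma real_rpow_subadd {p x y : ℝ} (hp : 0 ≤ p) (hp1 : p ≤ 1) (hx : 0 ≤ x) (hy : 0 ≤ y) :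
    (x + y) ^ p ≤ x ^ p + y ^ p := by
  have h := NNReal.rpow_add_le_add_rpow x.toNNReal y.toNNReal hp hp1
  have h2 := (NNReal.coe_le_coe).2 h
  simpa [← Real.toNNReal_add hx hy, NNReal.coe_rpow, Real.coe_toNNReal _ hx,
    Real.coe_toNNReal _ hy, Real.coe_toNNReal _ (add_nonneg hx hy)] using h2

private lemma real_rpow_superadd {p x y : ℝ} (hp : 1 ≤ p) (hx : 0 ≤ x) (hy : 0 ≤ y) :
    x ^ p + y ^ p ≤ (x + y) ^ p := by
  have h := NNReal.add_rpow_le_rpow_add x.toNNReal y.toNNReal hp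
  have h2 := (NNReal.coe_le_coe).2 h
  simpa [← Real.toNNReal_add hx hy, NNReal.coe_rpow, Real.coe_toNNReal _ hx,
    Real.coe_toNNReal _ hy, Real.coe_toNNReal _ (add_nonneg hx hy)] using h2

/-- For the density `ρ(x) = |x|^p + a` with `0 < p < 1`, there is a unique `β > 0`
with `β^(p+1) = (p+1)(M₀ - aβ)`, and the interval `[0, β]` has least weighted
perimeter `β^p + 2a` among all intervals of weighted mass `M₀` containing the
origin. -/
theorem stmt_7 (p a M₀ : ℝ) (hp0 : 0 < p) (hp1 : p < 1) (ha : 0 < a) (hM : 0 < M₀) :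
    ∃ β : ℝ, 0 < β ∧
      β ^ (p + 1) = (p + 1) * (M₀ - a * β) ∧
      (∀ b : ℝ, 0 < b → b ^ (p + 1) = (p + 1) * (M₀ - a * b) → b = β) ∧
      (∀ α' β' : ℝ, α' ≤ 0 → 0 ≤ β' →
        |α'| ^ (p + 1) / (p + 1) + β' ^ (p + 1) / (p + 1) + a * (|α'| + β') = M₀ →
        β ^ p + 2 * a ≤ |α'| ^ p + β' ^ p + 2 * a) := by
  have hp1' : (0:ℝ) < p + 1 := by linarith
  set g : ℝ → ℝ := fun t => t ^ (p + 1) + (p + 1) * a * t with hg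
  have hgmono : StrictMonoOn g (Set.Ici 0) := by
    intro x hx y hy hxy
    have h1 : x ^ (p+1) < y ^ (p+1) := Real.rpow_lt_rpow hx hxy hp1'
    have h2 : (p+1) * a * x < (p+1) * a * y := by
      have := mul_pos hp1' ha
      nlinarith
    simpa [g] using add_lt_add h1 h2
  have hgcont : ContinuousOn g (Set.Ici 0) := by
    apply ContinuousOn.add
    · intro x _
      exact (Real.continuousAt_rpow_const x (p+1) (Or.inr hp1'.le)).continuousWithinAt
    · exact (continuous_const.mul continuous_id).continuousOn
  set T : ℝ := M₀ / a + 1 with hT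
  have hT0 : 0 < T := by positivity
  have hgT : (p+1) * M₀ < g T := by
    have h1 : 0 ≤ T ^ (p+1) := Real.rpow_nonneg hT0.le _
    have h2 : (p+1) * a * T = (p+1) * (M₀ + a) := by
      have hMa : a * (M₀ / a) = M₀ := by field_simp
      rw [hT]; linear_combination (p+1) * hMa
    have : (p+1) * M₀ < (p+1) * (M₀ + a) := by nlinarith
    simp only [g]; nlinarith
  have hg0 : g 0 = 0 := by
    simp [g, Real.zero_rpow (ne_of_gt hp1')]
  have hmem : (p+1) * M₀ ∈ Set.Icc (g 0) (g T) := by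
    constructor
    · rw [hg0]; positivity
    · exact hgT.le
  obtain ⟨β, hβmem, hβeq⟩ := intermediate_value_Icc hT0.le
    (hgcont.mono (Set.Icc_subset_Ici_self)) hmem
  have hβ0 : 0 ≤ β := hβmem.1
  have hβpos : 0 < β := by
    rcases eq_or_lt_of_le hβ0 with h | h
    · exfalso
      rw [← h, hg0] at hβeq
      nlinarith
    · exact h
  refine ⟨β, hβpos, ?_, ?_, ?_⟩
  · have : β ^ (p+1) + (p+1) * a * β = (p+1) * M₀ := hβeq
    linarith [this, (by ring : (p+1) * (M₀ - a * β) = (p+1) * M₀ - (p+1) * a * β)]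
  · intro b hb heq
    have hgb : g b = g β := by
      have h1 : g b = (p+1) * M₀ := by simp only [g]; rw [heq]; ring
      rw [h1, hβeq]
    exact hgmono.injOn (Set.mem_Ici.2 hb.le) (Set.mem_Ici.2 hβ0) hgb
  · intro α' β' hα hβ' hmass
    set x : ℝ := |α'| with hx
    have hx0 : 0 ≤ x := abs_nonneg _
    have hmass' : x ^ (p+1) + β' ^ (p+1) + (p+1) * a * (x + β') = (p+1) * M₀ := by
      have h := hmass
      field_simp [hp1'.ne'] at h
      nlinarith [h]
    have hβeq' : β ^ (p+1) + (p+1) * a * β = (p+1) * M₀ := hβeq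
    have hsum : g x + g β' = g β := by
      simp only [g]
      nlinarith [hmass', hβeq']
    have hxy : g β ≤ g (x + β') := by
      have h1 : x ^ (p+1) + β' ^ (p+1) ≤ (x + β') ^ (p+1) :=
        real_rpow_superadd (by linarith) hx0 hβ'
      simp only [g] at *
      nlinarith
    have hβle : β ≤ x + β' := by
      by_contra hcon
      push_neg at hcon
      have := hgmono (Set.mem_Ici.2 (add_nonneg hx0 hβ')) (Set.mem_Ici.2 hβ0) hcon
      linarith
    have h1 : β ^ p ≤ (x + β') ^ p := Real.rpow_le_rpow hβ0 hβle hp0.le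
    have h2 : (x + β') ^ p ≤ x ^ p + β' ^ p := real_rpow_subadd hp0.le hp1.le hx0 hβ'
    linarith
end

section
/- Let ρ: ℝ → ℝ be continuous, strictly positive, and monotone increasing on [0, ∞). Let 0 < α₁ < β₁ < α₂ < β₂. Then there exists β₃ ∈ (β₁, β₂] such that ∫_{β₁}^{β₃} ρ(x) dx = ∫_{α₂}^{β₂} ρ(x) dx, and the single interval [α₁, β₃] has the same total weighted mass as the two intervals [α₁,β₁] and [α₂,β₂] together, with strictly smaller weighted perimeter: ρ(α₁) + ρ(β₃) < ρ(α₁) + ρ(β₁) + ρ(α₂) + ρ(β₂). -/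
/-- For a continuous, positive, monotone increasing density on `[0, ∞)`, two disjoint
intervals `[α₁, β₁]` and `[α₂, β₂]` in the positive half-line can be concatenated into
a single interval `[α₁, β₃]` of the same total weighted mass and strictly smaller
weighted perimeter. -/
theorem stmt_11 (ρ : ℝ → ℝ) (hcont : Continuous ρ)
    (hpos : ∀ x ∈ Set.Ici (0 : ℝ), 0 < ρ x)
    (hmono : MonotoneOn ρ (Set.Ici (0 : ℝ)))
    (α₁ β₁ α₂ β₂ : ℝ) (h1 : 0 < α₁) (h2 : α₁ < β₁) (h3 : β₁ < α₂) (h4 : α₂ < β₂) :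
    ∃ β₃ ∈ Set.Ioc β₁ β₂,
      (∫ x in β₁..β₃, ρ x) = (∫ x in α₂..β₂, ρ x) ∧
      (∫ x in α₁..β₃, ρ x) = (∫ x in α₁..β₁, ρ x) + (∫ x in α₂..β₂, ρ x) ∧
      ρ α₁ + ρ β₃ < ρ α₁ + ρ β₁ + ρ α₂ + ρ β₂ := by
  have hint : ∀ a b : ℝ, IntervalIntegrable ρ MeasureTheory.volume a b :=
    fun a b => hcont.intervalIntegrable a b
  set T : ℝ := ∫ x in α₂..β₂, ρ x with hT
  have hb1 : (0:ℝ) ≤ β₁ := le_of_lt (h1.trans h2)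
  have hTpos : 0 < T := by
    apply intervalIntegral.intervalIntegral_pos_of_pos_on (hint α₂ β₂)
    · intro x hx
      exact hpos x (le_trans (le_trans hb1 h3.le) hx.1.le)
    · exact h4
  set F : ℝ → ℝ := fun t => ∫ x in β₁..t, ρ x with hF
  have hFcont : ContinuousOn F (Set.Icc β₁ β₂) := by
    apply Continuous.continuousOn
    exact intervalIntegral.continuous_primitive (fun a b => hint a b) β₁
  have hsplit : F β₂ = (∫ x in β₁..α₂, ρ x) + T :=
    (intervalIntegral.integral_add_adjacent_intervals (hint β₁ α₂) (hint α₂ β₂)).symm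
  have hmid : 0 ≤ ∫ x in β₁..α₂, ρ x := by
    apply intervalIntegral.integral_nonneg h3.le
    intro x hx
    exact (hpos x (le_trans hb1 hx.1)).le
  have hTle : T ≤ F β₂ := by rw [hsplit]; linarith
  have hF0 : F β₁ = 0 := intervalIntegral.integral_same
  have hmem : T ∈ Set.Ioc (F β₁) (F β₂) := by rw [hF0]; exact ⟨hTpos, hTle⟩
  obtain ⟨β₃, hβ₃, hFβ₃⟩ := intermediate_value_Ioc (le_of_lt (h3.trans h4)) hFcont hmem
  refine ⟨β₃, hβ₃, hFβ₃, ?_, ?_⟩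
  · rw [← hFβ₃]
    exact (intervalIntegral.integral_add_adjacent_intervals (hint α₁ β₁) (hint β₁ β₃)).symm
  · have h5 : ρ β₃ ≤ ρ β₂ := hmono (le_trans hb1 hβ₃.1.le)
      (le_trans (le_trans hb1 h3.le) h4.le) hβ₃.2
    have h6 : 0 < ρ β₁ := hpos β₁ hb1
    have h7 : 0 < ρ α₂ := hpos α₂ (le_trans hb1 h3.le)
    linarith
end

section
/- Let ρ: ℝ → ℝ be continuous, strictly positive, and strictly increasing on [0, ∞). Let 0 < α₁ < β₁. Then there exists β₂ ∈ (0, β₁) such that ∫_0^{β₂} ρ(x) dx = ∫_{α₁}^{β₁} ρ(x) dx, and the interval [0, β₂] has strictly smaller weighted perimeter than [α₁, β₁]: ρ(0) + ρ(β₂) < ρ(α₁) + ρ(β₁). -/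
/-- For a continuous, positive, strictly increasing density on `[0, ∞)`, an interval
`[α₁, β₁]` in the positive half-line can be moved to an interval `[0, β₂]` with one end
at the origin, of the same weighted mass and strictly smaller weighted perimeter. -/
theorem stmt_12 (ρ : ℝ → ℝ) (hcont : Continuous ρ)
    (hpos : ∀ x ∈ Set.Ici (0 : ℝ), 0 < ρ x)
    (hmono : StrictMonoOn ρ (Set.Ici (0 : ℝ)))
    (α₁ β₁ : ℝ) (h1 : 0 < α₁) (h2 : α₁ < β₁) :
    ∃ β₂ ∈ Set.Ioo (0 : ℝ) β₁,
      (∫ x in (0 : ℝ)..β₂, ρ x) = (∫ x in α₁..β₁, ρ x) ∧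
      ρ 0 + ρ β₂ < ρ α₁ + ρ β₁ := by
  set F : ℝ → ℝ := fun t => ∫ x in (0:ℝ)..t, ρ x with hF
  have hFc : Continuous F :=
    intervalIntegral.continuous_primitive (fun a b => hcont.intervalIntegrable a b) 0
  have hint : ∀ a b : ℝ, IntervalIntegrable ρ MeasureTheory.volume a b :=
    fun a b => hcont.intervalIntegrable a b
  have hsplit : F α₁ + (∫ x in α₁..β₁, ρ x) = F β₁ :=
    intervalIntegral.integral_add_adjacent_intervals (hint 0 α₁) (hint α₁ β₁)
  have htpos : 0 < ∫ x in α₁..β₁, ρ x := by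
    apply intervalIntegral.intervalIntegral_pos_of_pos_on (hint α₁ β₁) _ h2
    intro x hx
    exact hpos x (le_of_lt (lt_trans h1 hx.1))
  have hFapos : 0 < F α₁ := by
    apply intervalIntegral.intervalIntegral_pos_of_pos_on (hint 0 α₁) _ h1
    intro x hx
    exact hpos x (le_of_lt hx.1)
  have hF0 : F 0 = 0 := intervalIntegral.integral_same
  have hmem : (∫ x in α₁..β₁, ρ x) ∈ Set.Ioo (F 0) (F β₁) := by
    constructor
    · rw [hF0]; exact htpos
    · linarith
  have := intermediate_value_Ioo (le_of_lt (lt_trans h1 h2)) hFc.continuousOn hmem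
  obtain ⟨β₂, hβ₂, hFβ₂⟩ := this
  refine ⟨β₂, hβ₂, hFβ₂, ?_⟩
  have h0α : ρ 0 < ρ α₁ := hmono (Set.mem_Ici.mpr le_rfl) (le_of_lt h1) h1
  have hβ : ρ β₂ < ρ β₁ := hmono (le_of_lt hβ₂.1) (le_of_lt (lt_trans h1 h2)) hβ₂.2
  linarith
end

section
/- Let M₀ > 0 and 0 < a ≤ a_crit := (2M₀/(3π))^(1/2). Then the minimum of the function P(R, r₀) = 2π(R³ + R·r₀² + R·a) over all R > 0 and r₀ ≥ 0 satisfying (π/2)·(R⁴ + 2R²r₀² + 2R²a) = M₀ equals 4π·(2M₀/(3π))^(3/4) (in particular it is independent of a), and it is attained at R = (2M₀/(3π))^(1/4) and r₀ = √(R² - a), i.e. where R² = r₀² + a. -/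
open Real in
/-- In the plane with density `ρ(r) = r² + a`, `0 < a ≤ (2M₀/(3π))^(1/2)`: the minimum
of the weighted perimeter `2π(R³ + R r₀² + R a)` over circles of weighted mass `M₀`
(i.e. `(π/2)(R⁴ + 2R²r₀² + 2R²a) = M₀`) equals `4π(2M₀/(3π))^(3/4)`, independent of
`a`, attained at `R = (2M₀/(3π))^(1/4)` and `r₀ = √(R² - a)`, i.e. where
`R² = r₀² + a`. -/
theorem stmt_14 (M₀ a : ℝ) (hM : 0 < M₀) (ha : 0 < a)
    (hcrit : a ≤ (2 * M₀ / (3 * π)) ^ ((1 : ℝ) / 2)) :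
    (∀ R r₀ : ℝ, 0 < R → 0 ≤ r₀ →
      (π / 2) * (R ^ 4 + 2 * R ^ 2 * r₀ ^ 2 + 2 * R ^ 2 * a) = M₀ →
      4 * π * (2 * M₀ / (3 * π)) ^ ((3 : ℝ) / 4) ≤
        2 * π * (R ^ 3 + R * r₀ ^ 2 + R * a)) ∧
    (let R₀ : ℝ := (2 * M₀ / (3 * π)) ^ ((1 : ℝ) / 4);
     let r₀ : ℝ := Real.sqrt (R₀ ^ 2 - a);
     0 < R₀ ∧ 0 ≤ r₀ ∧ R₀ ^ 2 = r₀ ^ 2 + a ∧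
      (π / 2) * (R₀ ^ 4 + 2 * R₀ ^ 2 * r₀ ^ 2 + 2 * R₀ ^ 2 * a) = M₀ ∧
      2 * π * (R₀ ^ 3 + R₀ * r₀ ^ 2 + R₀ * a) =
        4 * π * (2 * M₀ / (3 * π)) ^ ((3 : ℝ) / 4)) := by
  have hπ : 0 < π := Real.pi_pos
  set c : ℝ := 2 * M₀ / (3 * π) with hc
  have hcpos : 0 < c := by positivity
  set t : ℝ := c ^ ((1 : ℝ) / 4) with htdef
  have ht : 0 < t := Real.rpow_pos_of_pos hcpos _
  have ht4 : t ^ 4 = c := by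
    rw [htdef, ← Real.rpow_natCast (c ^ ((1:ℝ)/4)) 4, ← Real.rpow_mul hcpos.le]
    norm_num
  have ht3 : c ^ ((3 : ℝ) / 4) = t ^ 3 := by
    rw [htdef, ← Real.rpow_natCast (c ^ ((1:ℝ)/4)) 3, ← Real.rpow_mul hcpos.le]
    norm_num
  have ht2 : c ^ ((1 : ℝ) / 2) = t ^ 2 := by
    rw [htdef, ← Real.rpow_natCast (c ^ ((1:ℝ)/4)) 2, ← Real.rpow_mul hcpos.le]
    norm_num
  constructor
  · intro R r₀ hR hr₀ hmass
    rw [ht3]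
    have hcon : R ^ 4 + 2 * R ^ 2 * r₀ ^ 2 + 2 * R ^ 2 * a = 3 * t ^ 4 := by
      rw [ht4, hc]
      field_simp at hmass ⊢
      linarith
    have key : 0 ≤ (R - t) ^ 2 * (R ^ 2 + 2 * R * t + 3 * t ^ 2) := by positivity
    have h2 : 4 * t ^ 3 ≤ 2 * (R ^ 3 + R * r₀ ^ 2 + R * a) := by
      nlinarith [mul_pos hR ht, sq_nonneg (R - t), sq_nonneg (R + t)]
    nlinarith [mul_le_mul_of_nonneg_left h2 hπ.le]
  · intro R₀ r₀
    have hR2 : R₀ ^ 2 = t ^ 2 := by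
      show (c ^ ((1:ℝ)/4)) ^ 2 = t ^ 2
      rw [htdef]
    have hR0 : R₀ = t := htdef ▸ rfl
    have hsub : 0 ≤ R₀ ^ 2 - a := by
      rw [hR0, ← ht2]; linarith [hcrit]
    have hr₀sq : r₀ ^ 2 = R₀ ^ 2 - a := by
      show Real.sqrt (R₀ ^ 2 - a) ^ 2 = R₀ ^ 2 - a
      exact Real.sq_sqrt hsub
    have hr' : r₀ ^ 2 = t ^ 2 - a := by rw [hr₀sq, hR0]
    refine ⟨by rw [hR0]; exact ht, Real.sqrt_nonneg _, by linarith, ?_, ?_⟩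
    · have h4 : R₀ ^ 4 = c := by rw [hR0, ht4]
      have h1 : R₀ ^ 4 + 2 * R₀ ^ 2 * r₀ ^ 2 + 2 * R₀ ^ 2 * a = 3 * c := by
        rw [hr₀sq]; linear_combination 3 * h4
      rw [h1, hc]; field_simp
    · rw [ht3, hR0]
      linear_combination (2 * π * t) * hr'
end

section
/- Let M₀ > 0 and 0 < a ≤ a_crit := (15M₀/(32π))^(2/5). Then the minimum of the function S(R, r₀) = 4π(R⁴ + R²r₀² + R²a) over all R > 0 and r₀ ≥ 0 satisfying (4π/15)·(3R⁵ + 5R³r₀² + 5R³a) = M₀ equals 8π·(15M₀/(32π))^(4/5) (in particular it is independent of a), and it is attained at R = (15M₀/(32π))^(1/5) and r₀ = √(R² - a), i.e. where R² = r₀² + a. -/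
open Real in
/-- In `ℝ³` with density `ρ(r) = r² + a`, `0 < a ≤ (15M₀/(32π))^(2/5)`: the minimum of
the weighted surface area `4π(R⁴ + R²r₀² + R²a)` over spheres of weighted mass `M₀`
(i.e. `(4π/15)(3R⁵ + 5R³r₀² + 5R³a) = M₀`) equals `8π(15M₀/(32π))^(4/5)`, independent
of `a`, attained at `R = (15M₀/(32π))^(1/5)` and `r₀ = √(R² - a)`, i.e. where
`R² = r₀² + a`. -/
theorem stmt_17 (M₀ a : ℝ) (hM : 0 < M₀) (ha : 0 < a)
    (hcrit : a ≤ (15 * M₀ / (32 * π)) ^ ((2 : ℝ) / 5)) :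
    (∀ R r₀ : ℝ, 0 < R → 0 ≤ r₀ →
      (4 * π / 15) * (3 * R ^ 5 + 5 * R ^ 3 * r₀ ^ 2 + 5 * R ^ 3 * a) = M₀ →
      8 * π * (15 * M₀ / (32 * π)) ^ ((4 : ℝ) / 5) ≤
        4 * π * (R ^ 4 + R ^ 2 * r₀ ^ 2 + R ^ 2 * a)) ∧
    (let R₀ : ℝ := (15 * M₀ / (32 * π)) ^ ((1 : ℝ) / 5);
     let r₀ : ℝ := Real.sqrt (R₀ ^ 2 - a);
     0 < R₀ ∧ 0 ≤ r₀ ∧ R₀ ^ 2 = r₀ ^ 2 + a ∧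
      (4 * π / 15) * (3 * R₀ ^ 5 + 5 * R₀ ^ 3 * r₀ ^ 2 + 5 * R₀ ^ 3 * a) = M₀ ∧
      4 * π * (R₀ ^ 4 + R₀ ^ 2 * r₀ ^ 2 + R₀ ^ 2 * a) =
        8 * π * (15 * M₀ / (32 * π)) ^ ((4 : ℝ) / 5)) := by
  have hπ : 0 < π := Real.pi_pos
  have hc : 0 < 15 * M₀ / (32 * π) := by positivity
  set c : ℝ := 15 * M₀ / (32 * π) with hc_def
  set k : ℝ := c ^ ((1 : ℝ) / 5) with hk_def
  have hk : 0 < k := Real.rpow_pos_of_pos hc _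
  have hk5 : k ^ 5 = c := by
    rw [hk_def, ← Real.rpow_natCast (c ^ ((1 : ℝ) / 5)) 5, ← Real.rpow_mul hc.le]
    norm_num
  have h25 : c ^ ((2 : ℝ) / 5) = k ^ 2 := by
    rw [hk_def, ← Real.rpow_natCast (c ^ ((1 : ℝ) / 5)) 2, ← Real.rpow_mul hc.le]
    norm_num
  have h45 : c ^ ((4 : ℝ) / 5) = k ^ 4 := by
    rw [hk_def, ← Real.rpow_natCast (c ^ ((1 : ℝ) / 5)) 4, ← Real.rpow_mul hc.le]
    norm_num
  have hM0 : M₀ = 32 * π / 15 * k ^ 5 := by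
    rw [hk5, hc_def]; field_simp
  constructor
  · intro R r₀ hR hr₀ hmass
    have hE : 3 * R ^ 5 + 5 * R ^ 3 * r₀ ^ 2 + 5 * R ^ 3 * a = 8 * k ^ 5 := by
      rw [hM0] at hmass
      have hne : (4 * π / 15 : ℝ) ≠ 0 := by positivity
      field_simp at hmass ⊢
      nlinarith [hmass, hπ]
    have h1 : 5 * R * (R ^ 4 + R ^ 2 * r₀ ^ 2 + R ^ 2 * a) = 2 * R ^ 5 + 8 * k ^ 5 := by
      linear_combination hE
    have h2 : 0 ≤ (R - k) ^ 2 * (R ^ 3 + 2 * R ^ 2 * k + 3 * R * k ^ 2 + 4 * k ^ 3) := by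
      positivity
    have h3 : 5 * R * (2 * k ^ 4) ≤ 5 * R * (R ^ 4 + R ^ 2 * r₀ ^ 2 + R ^ 2 * a) := by
      rw [h1]; nlinarith [h2]
    have h4 : 2 * k ^ 4 ≤ R ^ 4 + R ^ 2 * r₀ ^ 2 + R ^ 2 * a :=
      le_of_mul_le_mul_left h3 (by positivity)
    rw [h45]
    nlinarith [mul_le_mul_of_nonneg_left h4 (le_of_lt (by positivity : (0:ℝ) < 4 * π))]
  · intro R₀ r₀
    have hR₀ : R₀ = k := rfl
    have hak : a ≤ k ^ 2 := by rw [← h25]; exact hcrit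
    have hr2 : r₀ ^ 2 = k ^ 2 - a := by
      show Real.sqrt (R₀ ^ 2 - a) ^ 2 = k ^ 2 - a
      rw [hR₀, Real.sq_sqrt (by linarith)]
    refine ⟨hR₀ ▸ hk, Real.sqrt_nonneg _, ?_, ?_, ?_⟩
    · rw [hR₀, hr2]; ring
    · rw [hR₀, hr2, hM0]; ring
    · rw [hR₀, hr2, h45]; ring
end
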